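/- arXiv:1111.0224 — 7 statements merged into one kernel-verified Lean document; each statement's English description precedes it below -/
import Mathlib

section
/- If G is a group whose center has finite index in G, then the derived subgroup [G,G] is finite. -/
open Subgroup
open scoped commutatorElement

lemma commutatorSet_finite_of_center_finiteIndex (G : Type*) [Group G]
    [(Subgroup.center G).FiniteIndex] : Finite (commutatorSet G) := by
  have hwd : ∀ (a b a' b' : G), (QuotientGroup.leftRel (center G)) a a' →
      (QuotientGroup.leftRel (center G)) b b' →
      (fun g h => ⁅g, h⁆ : G → G → G) a b = (fun g h => ⁅g, h⁆ : G → G → G) a' b' := by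
    intro a b a' b' ha hb
    have ha' : a⁻¹ * a' ∈ center G := QuotientGroup.leftRel_apply.mp ha
    have hb' : b⁻¹ * b' ∈ center G := QuotientGroup.leftRel_apply.mp hb
    obtain ⟨z, hz1, rfl⟩ : ∃ z ∈ center G, a' = a * z := ⟨a⁻¹ * a', ha', by group⟩
    obtain ⟨w, hw1, rfl⟩ : ∃ w ∈ center G, b' = b * w := ⟨b⁻¹ * b', hb', by group⟩
    rw [mem_center_iff] at hz1 hw1
    show ⁅a, b⁆ = ⁅a * z, b * w⁆
    simp only [commutatorElement_def, mul_inv_rev]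
    symm
    calc a * z * (b * w) * (z⁻¹ * a⁻¹) * (w⁻¹ * b⁻¹)
        = a * (z * (b * w) * z⁻¹) * a⁻¹ * w⁻¹ * b⁻¹ := by group
      _ = a * (b * w) * a⁻¹ * w⁻¹ * b⁻¹ := by rw [← hz1 (b * w)]; group
      _ = a * b * (w * a⁻¹) * w⁻¹ * b⁻¹ := by group
      _ = a * b * (a⁻¹ * w) * w⁻¹ * b⁻¹ := by rw [← hw1 a⁻¹]
      _ = a * b * a⁻¹ * b⁻¹ := by group
  let f : G ⧸ center G → G ⧸ center G → G := Quotient.lift₂ (fun g h => ⁅g, h⁆) hwd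
  have : Finite (G ⧸ center G) := (center G).finite_quotient_of_finiteIndex
  have hsub : commutatorSet G ⊆ Set.range (Function.uncurry f) := by
    rintro x ⟨g, h, rfl⟩
    exact ⟨((g : G ⧸ center G), (h : G ⧸ center G)), rfl⟩
  exact Finite.Set.subset _ hsub

/-- **Schur's theorem.** If the center of `G` has finite index, then the
derived subgroup `[G,G]` is finite. -/
theorem schur_finite_commutator (G : Type*) [Group G]
    [(Subgroup.center G).FiniteIndex] :
    Finite (_root_.commutator G) := by
  have := commutatorSet_finite_of_center_finiteIndex G
  infer_instance
end

section
/- If G is a group such that G/ζ_n(G) is finite for some positive integer n, then the nilpotent residual of G (the intersection of all normal subgroups N with G/N nilpotent) is finite. -/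
/-- The nilpotent residual of `G`: the intersection of all normal subgroups
`N` such that `G/N` is nilpotent. -/
def nilpotentResidual (G : Type*) [Group G] : Subgroup G :=
  sInf {N : Subgroup G | ∃ _ : N.Normal, Group.IsNilpotent (G ⧸ N)}


open scoped commutatorElement

section Helpers
variable {G : Type*} [Group G]

lemma comm_mul_right_central (a b z : G) (hz : z ∈ Subgroup.center G) :
    ⁅a, b * z⁆ = ⁅a, b⁆ := by
  have hz' := Subgroup.mem_center_iff.mp hz
  simp only [commutatorElement_def, mul_inv_rev]
  calc a * (b * z) * a⁻¹ * (z⁻¹ * b⁻¹) = a * b * (z * a⁻¹ * z⁻¹) * b⁻¹ := by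
        simp [mul_assoc]
    _ = a * b * a⁻¹ * b⁻¹ := by rw [← hz' a⁻¹]; simp [mul_assoc]

lemma comm_mul_left_central (a b z : G) (hz : z ∈ Subgroup.center G) :
    ⁅a * z, b⁆ = ⁅a, b⁆ := by
  have hz' := Subgroup.mem_center_iff.mp hz
  simp only [commutatorElement_def, mul_inv_rev]
  calc a * z * b * (z⁻¹ * a⁻¹) * b⁻¹ = a * (z * b * z⁻¹) * a⁻¹ * b⁻¹ := by
        simp [mul_assoc]
    _ = a * b * a⁻¹ * b⁻¹ := by rw [← hz' b]; simp [mul_assoc]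

lemma comm_mul_right_centralizes (a b c : G) (hc : c * a⁻¹ = a⁻¹ * c) :
    ⁅a, b * c⁆ = ⁅a, b⁆ := by
  simp only [commutatorElement_def, mul_inv_rev]
  calc a * (b * c) * a⁻¹ * (c⁻¹ * b⁻¹) = a * b * (c * a⁻¹ * c⁻¹) * b⁻¹ := by
        simp [mul_assoc]
    _ = a * b * a⁻¹ * b⁻¹ := by rw [hc]; simp [mul_assoc]

lemma comm_mul_expand (a b g : G) : ⁅a * b, g⁆ = a * ⁅b, g⁆ * a⁻¹ * ⁅a, g⁆ := by
  simp only [commutatorElement_def]; group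

end Helpers

section Schur
variable {G : Type*} [Group G]

/-- Schur-type: if `G` is covered by finitely many cosets of a central subgroup,
then the commutator set is finite. -/
lemma commutatorSet_finite_of_central_cover {Z : Subgroup G} (hZ : Z ≤ Subgroup.center G)
    (SV : Set G) (hSVfin : SV.Finite)
    (hSV : ∀ g : G, ∃ v ∈ SV, ∃ z ∈ Z, g = v * z) :
    (commutatorSet G).Finite := by
  refine (hSVfin.image2 (fun a b => ⁅a, b⁆) hSVfin).subset ?_
  rintro x ⟨a, b, rfl⟩
  obtain ⟨v, hv, z, hz, rfl⟩ := hSV a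
  obtain ⟨w, hw, y, hy, rfl⟩ := hSV b
  rw [comm_mul_right_central (v * z) w y (hZ hy), comm_mul_left_central v w z (hZ hz)]
  exact Set.mem_image2_of_mem hv hw

/-- Relative Schur: a subgroup covered by finitely many cosets of a subgroup of the
center of the ambient group has finite commutator (as a subgroup of `G`). -/
lemma finite_commutator_of_central_cover (H : Subgroup G)
    (SV : Set G) (hSVfin : SV.Finite) (hSVH : SV ⊆ (H : Set G))
    (hSV : ∀ h ∈ H, ∃ v ∈ SV, ∃ z, z ∈ Subgroup.center G ∧ z ∈ H ∧ h = v * z) :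
    Finite ↥(⁅H, H⁆ : Subgroup G) := by
  -- center of G intersected with H, as a subgroup of H
  let Z : Subgroup H := (Subgroup.center G).subgroupOf H
  have hZ : Z ≤ Subgroup.center H := by
    intro z hz
    rw [Subgroup.mem_center_iff]
    intro g
    exact Subtype.ext (Subgroup.mem_center_iff.mp hz.out g)
  have hfin : (commutatorSet H).Finite := by
    refine commutatorSet_finite_of_central_cover hZ
      {h : H | (h : G) ∈ SV} (hSVfin.preimage (Subtype.val_injective.injOn)) ?_
    rintro ⟨g, hg⟩
    obtain ⟨v, hv, z, hzc, hzH, rfl⟩ := hSV g hg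
    exact ⟨⟨v, hSVH hv⟩, hv, ⟨z, hzH⟩, hzc, rfl⟩
  haveI : Finite (commutatorSet H) := hfin
  haveI : Finite (_root_.commutator H) := inferInstance
  have hmap : Subgroup.map H.subtype (_root_.commutator H) = ⁅H, H⁆ := by
    rw [_root_.commutator_def, Subgroup.map_commutator]
    congr 1 <;> rw [← MonoidHom.range_eq_map, H.range_subtype]
  rw [← hmap]
  have : (Subgroup.map H.subtype (_root_.commutator H) : Set G).Finite := by
    rw [Subgroup.coe_map]
    exact Set.Finite.image _ (Set.toFinite _)
  exact this.to_subtype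

end Schur

section ThreeSubgroups
variable {G : Type*} [Group G]

open Subgroup

lemma commutator_top_upperCentralSeries_le (j : ℕ) :
    ⁅(⊤ : Subgroup G), Subgroup.upperCentralSeries G (j + 1)⁆ ≤ Subgroup.upperCentralSeries G j := by
  rw [Subgroup.commutator_le]
  intro g₁ _ g₂ hg₂
  have := (Subgroup.mem_upperCentralSeries_succ_iff).mp hg₂ g₁
  have h2 : ⁅g₂, g₁⁆ ∈ Subgroup.upperCentralSeries G j := this
  have : ⁅g₁, g₂⁆ = ⁅g₂, g₁⁆⁻¹ := by rw [commutatorElement_inv]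
  rw [this]
  exact inv_mem h2

/-- Three subgroups lemma, relative version. -/
lemma commutator_commutator_le_of_rotate {H₁ H₂ H₃ N : Subgroup G} [N.Normal]
    (h1 : ⁅⁅H₂, H₃⁆, H₁⁆ ≤ N) (h2 : ⁅⁅H₃, H₁⁆, H₂⁆ ≤ N) :
    ⁅⁅H₁, H₂⁆, H₃⁆ ≤ N := by
  let π := QuotientGroup.mk' N
  have key : ∀ {A B C : Subgroup G}, ⁅⁅A, B⁆, C⁆ ≤ N →
      ⁅⁅Subgroup.map π A, Subgroup.map π B⁆, Subgroup.map π C⁆ = ⊥ := by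
    intro A B C h
    rw [← Subgroup.map_commutator, ← Subgroup.map_commutator,
      Subgroup.map_eq_bot_iff, QuotientGroup.ker_mk' N]
    exact h
  have := Subgroup.commutator_commutator_eq_bot_of_rotate (key h1) (key h2)
  rw [← Subgroup.map_commutator, ← Subgroup.map_commutator] at this
  intro x hx
  have : π x = 1 := by
    have hmem : π x ∈ (⊥ : Subgroup (G ⧸ N)) := this ▸ ⟨x, hx, rfl⟩
    simpa using hmem
  rwa [← QuotientGroup.ker_mk' N, MonoidHom.mem_ker]

lemma lowerCentral_comm_upperCentral (n : ℕ) : ∀ j : ℕ,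
    ⁅Subgroup.lowerCentralSeries (⊤ : Subgroup G) n, Subgroup.upperCentralSeries G (n + 1 + j)⁆ ≤ Subgroup.upperCentralSeries G j := by
  induction n with
  | zero =>
    intro j
    have : (0:ℕ) + 1 + j = j + 1 := by omega
    rw [this, Subgroup.lowerCentralSeries_zero]
    exact commutator_top_upperCentralSeries_le j
  | succ n ih =>
    intro j
    have hsucc : Subgroup.lowerCentralSeries (⊤ : Subgroup G) (n + 1) = ⁅Subgroup.lowerCentralSeries (⊤ : Subgroup G) n, ⊤⁆ := by
      rw [Subgroup.lowerCentralSeries_succ]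
    rw [hsucc]
    refine commutator_commutator_le_of_rotate ?_ ?_
    · -- ⁅⁅⊤, ζ_{n+2+j}⁆, L_n⁆ ≤ ζ_j
      have e : n + 1 + 1 + j = (n + 1 + j) + 1 := by omega
      rw [e]
      calc ⁅⁅(⊤ : Subgroup G), Subgroup.upperCentralSeries G ((n + 1 + j) + 1)⁆, Subgroup.lowerCentralSeries (⊤ : Subgroup G) n⁆
          ≤ ⁅Subgroup.upperCentralSeries G (n + 1 + j), Subgroup.lowerCentralSeries (⊤ : Subgroup G) n⁆ :=
            Subgroup.commutator_mono (commutator_top_upperCentralSeries_le _) le_rfl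
        _ = ⁅Subgroup.lowerCentralSeries (⊤ : Subgroup G) n, Subgroup.upperCentralSeries G (n + 1 + j)⁆ :=
            Subgroup.commutator_comm _ _
        _ ≤ Subgroup.upperCentralSeries G j := ih j
    · -- ⁅⁅ζ_{n+2+j}, L_n⁆, ⊤⁆ ≤ ζ_j
      have e : n + 1 + 1 + j = n + 1 + (j + 1) := by omega
      rw [e]
      calc ⁅⁅Subgroup.upperCentralSeries G (n + 1 + (j + 1)), Subgroup.lowerCentralSeries (⊤ : Subgroup G) n⁆, (⊤ : Subgroup G)⁆
          = ⁅⁅Subgroup.lowerCentralSeries (⊤ : Subgroup G) n, Subgroup.upperCentralSeries G (n + 1 + (j + 1))⁆, (⊤ : Subgroup G)⁆ := by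
            rw [Subgroup.commutator_comm (Subgroup.upperCentralSeries G (n + 1 + (j + 1)))]
        _ ≤ ⁅Subgroup.upperCentralSeries G (j + 1), (⊤ : Subgroup G)⁆ :=
            Subgroup.commutator_mono (ih (j + 1)) le_rfl
        _ = ⁅(⊤ : Subgroup G), Subgroup.upperCentralSeries G (j + 1)⁆ := Subgroup.commutator_comm _ _
        _ ≤ Subgroup.upperCentralSeries G j := commutator_top_upperCentralSeries_le j

lemma upperCentral_centralizes_lowerCentral {n : ℕ} {m c : G}
    (hm : m ∈ Subgroup.lowerCentralSeries (⊤ : Subgroup G) n) (hc : c ∈ Subgroup.upperCentralSeries G (n + 1)) :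
    c * m = m * c := by
  have h := lowerCentral_comm_upperCentral (G := G) n 0
  rw [Nat.add_zero] at h
  have : ⁅m, c⁆ ∈ Subgroup.upperCentralSeries G 0 := h (Subgroup.commutator_mem_commutator hm hc)
  rw [Subgroup.upperCentralSeries_zero, Subgroup.mem_bot] at this
  exact (commutatorElement_eq_one_iff_mul_comm.mp this).symm

end ThreeSubgroups

section AbelianCase
variable {G : Type*} [Group G]

open Subgroup

/-- Key abelian case: if `M` is an abelian normal subgroup, covered by finitely many
central cosets, of finite exponent modulo the center, and centralized by a subgroup `C`
of finite "index" (in the sense of a finite coset cover), then `⁅M, ⊤⁆` is finite. -/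
lemma finite_commutator_top_of_abelian (M C : Subgroup G) [hM : M.Normal]
    (habel : ∀ x ∈ M, ∀ y ∈ M, x * y = y * x)
    (hC : ∀ c ∈ C, ∀ m ∈ M, c * m = m * c)
    (ST : Set G) (hSTfin : ST.Finite)
    (hST : ∀ m ∈ M, ∃ t ∈ ST, ∃ z ∈ Subgroup.center G, m = t * z)
    (e : ℕ) (hepos : 0 < e) (hME : ∀ m ∈ M, m ^ e ∈ Subgroup.center G)
    (SU : Set G) (hSUfin : SU.Finite)
    (hSU : ∀ g : G, ∃ u ∈ SU, ∃ c ∈ C, g = u * c) :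
    Finite ↥(⁅M, (⊤ : Subgroup G)⁆ : Subgroup G) := by
  classical
  -- The set of commutators
  set S : Set G := {x | ∃ p ∈ M, ∃ q ∈ (⊤ : Subgroup G), ⁅p, q⁆ = x} with hS
  have hcomm_def : (⁅M, (⊤ : Subgroup G)⁆ : Subgroup G) = Subgroup.closure S :=
    Subgroup.commutator_def M ⊤
  -- S is finite
  have hSfin : S.Finite := by
    refine (hSTfin.image2 (fun a b => ⁅a, b⁆) hSUfin).subset ?_
    rintro x ⟨m, hm, g, -, rfl⟩
    obtain ⟨t, ht, z, hz, rfl⟩ := hST m hm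
    obtain ⟨u, hu, c, hc, rfl⟩ := hSU g
    have hcm : c * (t * z)⁻¹ = (t * z)⁻¹ * c := hC c hc _ (inv_mem hm)
    rw [comm_mul_right_centralizes (t * z) u c hcm, comm_mul_left_central t u z hz]
    exact Set.mem_image2_of_mem ht hu
  -- S ⊆ M
  have hSM : S ⊆ (M : Set G) := by
    rintro x ⟨m, hm, g, -, rfl⟩
    have : ⁅m, g⁆ = m * (g * m⁻¹ * g⁻¹) := by
      simp only [commutatorElement_def]; group
    rw [this]
    exact M.mul_mem hm (hM.conj_mem m⁻¹ (inv_mem hm) g)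
  -- every element of S is torsion
  have hStor : ∀ x ∈ S, x ^ e = 1 := by
    rintro x ⟨m, hm, g, -, rfl⟩
    have key : ∀ k : ℕ, ⁅m, g⁆ ^ k = ⁅m ^ k, g⁆ := by
      intro k
      induction k with
      | zero => simp
      | succ k ih =>
        have hmk : m ^ k ∈ M := pow_mem hm k
        have hcomm_mem : ⁅m ^ k, g⁆ ∈ M := by
          have : ⁅m ^ k, g⁆ = m ^ k * (g * (m ^ k)⁻¹ * g⁻¹) := by
            simp only [commutatorElement_def]; group
          rw [this]
          exact M.mul_mem hmk (hM.conj_mem _ (inv_mem hmk) g)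
        have expand : ⁅m ^ (k + 1), g⁆ = m * ⁅m ^ k, g⁆ * m⁻¹ * ⁅m, g⁆ := by
          rw [pow_succ']
          exact comm_mul_expand m (m ^ k) g
        have hconj : m * ⁅m ^ k, g⁆ * m⁻¹ = ⁅m ^ k, g⁆ := by
          rw [habel m hm _ hcomm_mem]
          group
        rw [pow_succ, ih, expand, hconj]
    have : ⁅m, g⁆ ^ e = ⁅m ^ e, g⁆ := key e
    rw [this]
    exact commutatorElement_eq_one_iff_mul_comm.mpr
      ((Subgroup.mem_center_iff.mp (hME m hm) g).symm)
  -- work inside the abelian group M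
  letI : CommGroup ↥M :=
    { (inferInstance : Group ↥M) with
      mul_comm := fun a b => Subtype.ext (habel a a.2 b b.2) }
  set S' : Set ↥M := {x : ↥M | (x : G) ∈ S} with hS'
  have hS'fin : S'.Finite := hSfin.preimage (Subtype.val_injective.injOn)
  haveI : Finite ↥S' := hS'fin
  set K' : Subgroup ↥M := Subgroup.closure S' with hK'
  haveI : Group.FG ↥K' := Group.closure_finite_fg S'
  -- K' is torsion
  have hK'tor : Monoid.IsTorsion ↥K' := by
    have hle : K' ≤ CommGroup.torsion ↥M := by
      rw [hK', Subgroup.closure_le]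
      intro x hx
      rw [SetLike.mem_coe, CommGroup.mem_torsion]
      refine isOfFinOrder_iff_pow_eq_one.mpr ⟨e, hepos, ?_⟩
      exact Subtype.ext (by simpa using hStor _ hx)
    intro x
    have : IsOfFinOrder (x : ↥M) := (CommGroup.mem_torsion _).mp (hle x.2)
    obtain ⟨k, hk, hpow⟩ := isOfFinOrder_iff_pow_eq_one.mp this
    exact isOfFinOrder_iff_pow_eq_one.mpr ⟨k, hk, Subtype.ext (by simpa using hpow)⟩
  haveI : Finite ↥K' := CommGroup.finite_of_fg_torsion ↥K' hK'tor
  -- transfer back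
  have hmap : Subgroup.map M.subtype K' = Subgroup.closure S := by
    rw [hK', MonoidHom.map_closure]
    congr 1
    ext x
    constructor
    · rintro ⟨y, hy, rfl⟩; exact hy
    · intro hx; exact ⟨⟨x, hSM hx⟩, hx, rfl⟩
  rw [hcomm_def, ← hmap]
  have : (Subgroup.map M.subtype K' : Set G).Finite := by
    rw [Subgroup.coe_map]
    exact Set.Finite.image _ (Set.toFinite _)
  exact this.to_subtype

end AbelianCase

section GeneralCase
variable {G : Type*} [Group G]

open Subgroup Pointwise

/-- Baer-type key lemma: if the normal subgroup `M` is covered by finitely many central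
cosets (with coset representatives in `M`), has finite exponent modulo the center, and
is centralized by a subgroup `C` with a finite coset cover of `G`, then `⁅M, ⊤⁆` is
finite. -/
lemma finite_commutator_top (M C : Subgroup G) [hM : M.Normal]
    (hC : ∀ c ∈ C, ∀ m ∈ M, c * m = m * c)
    (ST : Set G) (hSTfin : ST.Finite) (hSTM : ST ⊆ (M : Set G))
    (hST : ∀ m ∈ M, ∃ t ∈ ST, ∃ z ∈ Subgroup.center G, m = t * z)
    (e : ℕ) (hepos : 0 < e) (hME : ∀ m ∈ M, m ^ e ∈ Subgroup.center G)
    (SU : Set G) (hSUfin : SU.Finite)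
    (hSU : ∀ g : G, ∃ u ∈ SU, ∃ c ∈ C, g = u * c) :
    Finite ↥(⁅M, (⊤ : Subgroup G)⁆ : Subgroup G) := by
  classical
  -- Step 1: H := M ⊔ center G has finite commutator subgroup (Schur).
  set H : Subgroup G := M ⊔ Subgroup.center G with hH
  have hMH : M ≤ H := le_sup_left
  have hZH : Subgroup.center G ≤ H := le_sup_right
  haveI : H.Normal := Subgroup.sup_normal M (Subgroup.center G)
  have hHfin : Finite ↥(⁅H, H⁆ : Subgroup G) := by
    refine finite_commutator_of_central_cover H ST hSTfin
      (fun t ht => hMH (hSTM ht)) ?_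
    intro h hh
    rw [hH] at hh
    have : h ∈ (M : Set G) * (Subgroup.center G : Set G) := by
      rw [← Subgroup.mul_normal M (Subgroup.center G)]
      exact_mod_cast hh
    obtain ⟨m, hm, z₀, hz₀, rfl⟩ := this
    obtain ⟨t, ht, z, hz, rfl⟩ := hST m hm
    have hz₀' : z₀ ∈ Subgroup.center G := hz₀
    refine ⟨t, ht, z * z₀, mul_mem hz hz₀', ?_, by show t * z * z₀ = t * (z * z₀); rw [mul_assoc]⟩
    exact hZH (mul_mem hz hz₀')
  set N₀ : Subgroup G := ⁅H, H⁆ with hN₀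
  haveI : N₀.Normal := Subgroup.commutator_normal H H
  haveI : Finite ↥N₀ := hHfin
  set π : G →* G ⧸ N₀ := QuotientGroup.mk' N₀ with hπ
  have hπsurj : Function.Surjective π := QuotientGroup.mk'_surjective N₀
  -- Step 2: apply the abelian case in the quotient.
  set Mb : Subgroup (G ⧸ N₀) := Subgroup.map π M with hMb
  set Cb : Subgroup (G ⧸ N₀) := Subgroup.map π C with hCb
  haveI : Mb.Normal := hM.map π hπsurj
  have hπcenter : ∀ z ∈ Subgroup.center G, π z ∈ Subgroup.center (G ⧸ N₀) := by
    intro z hz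
    rw [Subgroup.mem_center_iff]
    intro g
    obtain ⟨g, rfl⟩ := hπsurj g
    rw [← map_mul, ← map_mul, Subgroup.mem_center_iff.mp hz g]
  have habel : ∀ x ∈ Mb, ∀ y ∈ Mb, x * y = y * x := by
    rintro _ ⟨x, hx, rfl⟩ _ ⟨y, hy, rfl⟩
    have : ⁅x, y⁆ ∈ N₀ := hN₀ ▸ Subgroup.commutator_mem_commutator (hMH hx) (hMH hy)
    have h1 : π ⁅x, y⁆ = 1 := (QuotientGroup.eq_one_iff _).mpr this
    rw [map_commutatorElement] at h1
    exact commutatorElement_eq_one_iff_mul_comm.mp h1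
  have hCbcent : ∀ c ∈ Cb, ∀ m ∈ Mb, c * m = m * c := by
    rintro _ ⟨c, hc, rfl⟩ _ ⟨m, hm, rfl⟩
    rw [← map_mul, ← map_mul, hC c hc m hm]
  have hSTb : ∀ m ∈ Mb, ∃ t ∈ π '' ST, ∃ z ∈ Subgroup.center (G ⧸ N₀), m = t * z := by
    rintro _ ⟨m, hm, rfl⟩
    obtain ⟨t, ht, z, hz, rfl⟩ := hST m hm
    exact ⟨π t, Set.mem_image_of_mem π ht, π z, hπcenter z hz, map_mul π t z⟩
  have hMEb : ∀ m ∈ Mb, m ^ e ∈ Subgroup.center (G ⧸ N₀) := by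
    rintro _ ⟨m, hm, rfl⟩
    rw [← map_pow]
    exact hπcenter _ (hME m hm)
  have hSUb : ∀ g : G ⧸ N₀, ∃ u ∈ π '' SU, ∃ c ∈ Cb, g = u * c := by
    intro g
    obtain ⟨g, rfl⟩ := hπsurj g
    obtain ⟨u, hu, c, hc, rfl⟩ := hSU g
    exact ⟨π u, Set.mem_image_of_mem π hu, π c, ⟨c, hc, rfl⟩, map_mul π u c⟩
  have hfinb : Finite ↥(⁅Mb, (⊤ : Subgroup (G ⧸ N₀))⁆ : Subgroup (G ⧸ N₀)) :=
    finite_commutator_top_of_abelian Mb Cb habel hCbcent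
      (π '' ST) (hSTfin.image π) hSTb e hepos hMEb (π '' SU) (hSUfin.image π) hSUb
  -- Step 3: pull back along π.
  set K : Subgroup G := ⁅M, (⊤ : Subgroup G)⁆ with hK
  have hmapK : Subgroup.map π K = ⁅Mb, (⊤ : Subgroup (G ⧸ N₀))⁆ := by
    rw [hK, Subgroup.map_commutator, Subgroup.map_top_of_surjective π hπsurj]
  -- K is finite: its image under π is finite and the "kernel part" K ⊓ N₀ is finite.
  set f : ↥K →* G ⧸ N₀ := π.comp K.subtype with hf
  haveI : Finite ↥f.range := by
    have : f.range = Subgroup.map π K := by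
      rw [hf, MonoidHom.range_comp, Subgroup.range_subtype]
    rw [this, hmapK]
    exact hfinb
  haveI : Finite ↥(MonoidHom.ker f) := by
    refine Finite.of_injective (fun x => (⟨(x : ↥K), ?_⟩ : ↥N₀)) ?_
    · have : π ((x : ↥K) : G) = 1 := x.2
      rwa [← MonoidHom.mem_ker, QuotientGroup.ker_mk' N₀] at this
    · intro a b hab
      simp only [Subtype.mk.injEq] at hab
      exact Subtype.ext (Subtype.ext hab)
  haveI : Finite (↥K ⧸ MonoidHom.ker f) :=
    Finite.of_equiv _ (QuotientGroup.quotientKerEquivRange f).symm.toEquiv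
  exact Finite.of_equiv _ (Subgroup.groupEquivQuotientProdSubgroup (s := MonoidHom.ker f)).symm

end GeneralCase

section Baer
variable {G : Type*} [Group G]

open Subgroup

lemma lowerCentralSeries_succ_eq_commutator (G : Type*) [Group G] (n : ℕ) :
    Subgroup.lowerCentralSeries (⊤ : Subgroup G) (n + 1) = ⁅Subgroup.lowerCentralSeries (⊤ : Subgroup G) n, (⊤ : Subgroup G)⁆ := by
  rw [Subgroup.lowerCentralSeries_succ]

lemma lowerCentralSeries_map_eq_of_surjective {G H : Type*} [Group G] [Group H]
    (f : G →* H) (hf : Function.Surjective f) (n : ℕ) :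
    Subgroup.map f (Subgroup.lowerCentralSeries (⊤ : Subgroup G) n) = Subgroup.lowerCentralSeries (⊤ : Subgroup H) n := by
  induction n with
  | zero =>
    rw [Subgroup.lowerCentralSeries_zero, Subgroup.lowerCentralSeries_zero]
    exact Subgroup.map_top_of_surjective f hf
  | succ n ih =>
    rw [lowerCentralSeries_succ_eq_commutator, lowerCentralSeries_succ_eq_commutator,
      Subgroup.map_commutator, ih, Subgroup.map_top_of_surjective f hf]

/-- **Baer's theorem**: if the `n`-th upper central quotient of `G` is finite, then the
`n`-th lower central series term is finite. -/
theorem baer_finite_lowerCentralSeries :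
    ∀ (n : ℕ) (G : Type*) [Group G], Finite (G ⧸ Subgroup.upperCentralSeries G n) →
      Finite ↥(Subgroup.lowerCentralSeries (⊤ : Subgroup G) n) := by
  intro n
  induction n with
  | zero =>
    intro G _ h
    haveI : Finite (G ⧸ (⊥ : Subgroup G)) := h
    haveI : Finite G := Finite.of_equiv _ (QuotientGroup.quotientBot (G := G)).toEquiv
    infer_instance
  | succ n ih =>
    intro G _ h
    classical
    set Z : Subgroup G := Subgroup.center G with hZ
    set π₀ : G →* G ⧸ Z := QuotientGroup.mk' Z with hπ₀
    have hπ₀surj : Function.Surjective π₀ := QuotientGroup.mk'_surjective Z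
    -- the quotient of G/Z by its n-th upper central subgroup is finite
    have hquot : Finite ((G ⧸ Z) ⧸ Subgroup.upperCentralSeries (G ⧸ Z) n) := by
      set φ : G →* (G ⧸ Z) ⧸ Subgroup.upperCentralSeries (G ⧸ Z) n :=
        (QuotientGroup.mk' (Subgroup.upperCentralSeries (G ⧸ Z) n)).comp π₀ with hφ
      have hφsurj : Function.Surjective φ :=
        (QuotientGroup.mk'_surjective _).comp hπ₀surj
      have hker : MonoidHom.ker φ = Subgroup.upperCentralSeries G (n + 1) := by
        rw [hφ, ← MonoidHom.comap_ker, QuotientGroup.ker_mk']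
        exact Subgroup.comap_upperCentralSeries_quotient_center n
      haveI : Finite (G ⧸ MonoidHom.ker φ) := by rw [hker]; exact h
      exact Finite.of_surjective
        (QuotientGroup.quotientKerEquivOfSurjective φ hφsurj).toEquiv
        (QuotientGroup.quotientKerEquivOfSurjective φ hφsurj).toEquiv.surjective
    -- inductive hypothesis: the image of M := Subgroup.lowerCentralSeries (⊤ : Subgroup G) n in G/Z is finite
    have hMbar : Finite ↥(Subgroup.lowerCentralSeries (⊤ : Subgroup (G ⧸ Z)) n) := ih (G ⧸ Z) hquot
    set M : Subgroup G := Subgroup.lowerCentralSeries (⊤ : Subgroup G) n with hMdef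
    have hmapM : Subgroup.map π₀ M = Subgroup.lowerCentralSeries (⊤ : Subgroup (G ⧸ Z)) n :=
      lowerCentralSeries_map_eq_of_surjective π₀ hπ₀surj n
    haveI hMbar' : Finite ↥(Subgroup.map π₀ M) := by rw [hmapM]; exact hMbar
    -- the centralizing subgroup
    set C : Subgroup G := Subgroup.upperCentralSeries G (n + 1) with hCdef
    have hC : ∀ c ∈ C, ∀ m ∈ M, c * m = m * c := fun c hc m hm =>
      upperCentral_centralizes_lowerCentral hm hc
    -- coset representatives of C
    haveI : Finite (G ⧸ C) := h
    set SU : Set G := Set.range (fun q : G ⧸ C => q.out) with hSU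
    have hSUfin : SU.Finite := Set.finite_range _
    have hSUcover : ∀ g : G, ∃ u ∈ SU, ∃ c ∈ C, g = u * c := by
      intro g
      refine ⟨(QuotientGroup.mk g : G ⧸ C).out, Set.mem_range_self _,
        ((QuotientGroup.mk g : G ⧸ C).out)⁻¹ * g, ?_, by group⟩
      have : (QuotientGroup.mk ((QuotientGroup.mk g : G ⧸ C).out) : G ⧸ C)
          = QuotientGroup.mk g := QuotientGroup.out_eq' _
      exact QuotientGroup.eq.mp this
    -- coset representatives of the center inside M
    have hrep : ∀ x : ↥(Subgroup.map π₀ M), ∃ m : G, m ∈ M ∧ π₀ m = (x : G ⧸ Z) := by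
      intro x
      obtain ⟨m, hm, hx⟩ := Subgroup.mem_map.mp x.2
      exact ⟨m, hm, hx⟩
    set rep : ↥(Subgroup.map π₀ M) → G := fun x => Classical.choose (hrep x) with hrepdef
    set ST : Set G := Set.range rep with hSTdef
    have hSTfin : ST.Finite := Set.finite_range _
    have hSTM : ST ⊆ (M : Set G) := by
      rintro _ ⟨x, rfl⟩
      exact (Classical.choose_spec (hrep x)).1
    have hSTcover : ∀ m ∈ M, ∃ t ∈ ST, ∃ z ∈ Subgroup.center G, m = t * z := by
      intro m hm
      set x : ↥(Subgroup.map π₀ M) := ⟨π₀ m, Subgroup.mem_map_of_mem π₀ hm⟩ with hx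
      refine ⟨rep x, Set.mem_range_self _, (rep x)⁻¹ * m, ?_, by group⟩
      have hπ : π₀ (rep x) = π₀ m := (Classical.choose_spec (hrep x)).2
      have : π₀ ((rep x)⁻¹ * m) = 1 := by
        rw [map_mul, map_inv, hπ]; group
      rwa [← MonoidHom.mem_ker, QuotientGroup.ker_mk'] at this
    -- exponent
    set e : ℕ := Nat.card ↥(Subgroup.map π₀ M) with he
    have hepos : 0 < e := Nat.card_pos
    have hME : ∀ m ∈ M, m ^ e ∈ Subgroup.center G := by
      intro m hm
      set x : ↥(Subgroup.map π₀ M) := ⟨π₀ m, Subgroup.mem_map_of_mem π₀ hm⟩ with hx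
      have : x ^ e = 1 := pow_card_eq_one'
      have hcoe : π₀ (m ^ e) = 1 := by
        have := congrArg Subtype.val this
        simpa [hx] using this
      rwa [← MonoidHom.mem_ker, QuotientGroup.ker_mk'] at hcoe
    have := finite_commutator_top M C hC ST hSTfin hSTM hSTcover e hepos hME
      SU hSUfin hSUcover
    rwa [lowerCentralSeries_succ_eq_commutator]

end Baer

/-- If `G/ζ_n(G)` is finite for some positive integer `n`, then the nilpotent
residual of `G` is finite. -/
theorem nilpotentResidual_finite_of_finite_upperCentral_quotient
    (G : Type*) [Group G] (n : ℕ) (hn : 0 < n)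
    (hfin : Finite (G ⧸ upperCentralSeries G n)) :
    Finite (nilpotentResidual G) := by
  have hfinL : Finite ↥(Subgroup.lowerCentralSeries (⊤ : Subgroup G) n) := baer_finite_lowerCentralSeries n G hfin
  set N : Subgroup G := Subgroup.lowerCentralSeries (⊤ : Subgroup G) n with hN
  have hnormal : N.Normal := inferInstance
  have hnilp : Group.IsNilpotent (G ⧸ N) := by
    refine nilpotent_iff_lowerCentralSeries.mpr ⟨n, ?_⟩
    rw [← lowerCentralSeries_map_eq_of_surjective (QuotientGroup.mk' N)
      (QuotientGroup.mk'_surjective N) n, Subgroup.map_eq_bot_iff, QuotientGroup.ker_mk']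
  have hle : nilpotentResidual G ≤ N := sInf_le ⟨hnormal, hnilp⟩
  have : ((nilpotentResidual G : Set G)).Finite :=
    Set.Finite.subset (Set.toFinite (N : Set G)) hle
  exact this.to_subtype
end

section
/- Let G be a group, K ≤ G a subgroup, and n a positive integer such that G = K·ζ_n(G). Then ζ_n(K) = K ∩ ζ_n(G). -/
/-- Three subgroups lemma relative to a normal subgroup. -/
private lemma three_subgroups_le {G : Type*} [Group G] {H₁ H₂ H₃ N : Subgroup G} [N.Normal]
    (h1 : ⁅⁅H₂, H₃⁆, H₁⁆ ≤ N) (h2 : ⁅⁅H₃, H₁⁆, H₂⁆ ≤ N) : ⁅⁅H₁, H₂⁆, H₃⁆ ≤ N := by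
  have key : ∀ {A B C : Subgroup G}, ⁅⁅A, B⁆, C⁆ ≤ N ↔
      ⁅⁅A.map (QuotientGroup.mk' N), B.map (QuotientGroup.mk' N)⁆,
        C.map (QuotientGroup.mk' N)⁆ = ⊥ := by
    intro A B C
    rw [← Subgroup.map_commutator, ← Subgroup.map_commutator, Subgroup.map_eq_bot_iff,
      QuotientGroup.ker_mk']
  rw [key] at h1 h2 ⊢
  exact Subgroup.commutator_commutator_eq_bot_of_rotate h1 h2

private lemma top_ucs_le {G : Type*} [Group G] (m : ℕ) :
    ⁅(⊤ : Subgroup G), Subgroup.upperCentralSeries G (m + 1)⁆ ≤ Subgroup.upperCentralSeries G m := by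
  rw [Subgroup.commutator_le]
  intro g _ z hz
  have h := mem_upperCentralSeries_succ_iff.mp hz g
  have h2 : (z * g * z⁻¹ * g⁻¹)⁻¹ ∈ Subgroup.upperCentralSeries G m := inv_mem h
  simpa [commutatorElement_def, mul_assoc] using h2

/-- `[γ_i(G), Z_{m+i+1}(G)] ≤ Z_m(G)`. -/
private lemma lcs_ucs_le {G : Type*} [Group G] :
    ∀ i m : ℕ, ⁅(⊤ : Subgroup G).lowerCentralSeries i, Subgroup.upperCentralSeries G (m + i + 1)⁆ ≤
      Subgroup.upperCentralSeries G m := by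
  intro i
  induction i with
  | zero => intro m; simpa using top_ucs_le m
  | succ i ih =>
    intro m
    have hidx : m + (i + 1) + 1 = (m + 1) + i + 1 := by omega
    show ⁅⁅(⊤ : Subgroup G).lowerCentralSeries i, ⊤⁆, Subgroup.upperCentralSeries G (m + (i + 1) + 1)⁆ ≤
      Subgroup.upperCentralSeries G m
    apply three_subgroups_le
    · calc ⁅⁅(⊤ : Subgroup G), Subgroup.upperCentralSeries G (m + (i + 1) + 1)⁆, (⊤ : Subgroup G).lowerCentralSeries i⁆
          ≤ ⁅Subgroup.upperCentralSeries G (m + i + 1), (⊤ : Subgroup G).lowerCentralSeries i⁆ := by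
            apply Subgroup.commutator_mono _ le_rfl
            have : m + (i + 1) + 1 = (m + i + 1) + 1 := by omega
            rw [this]; exact top_ucs_le _
        _ = ⁅(⊤ : Subgroup G).lowerCentralSeries i, Subgroup.upperCentralSeries G (m + i + 1)⁆ :=
            Subgroup.commutator_comm _ _
        _ ≤ Subgroup.upperCentralSeries G m := ih m
    · calc ⁅⁅Subgroup.upperCentralSeries G (m + (i + 1) + 1), (⊤ : Subgroup G).lowerCentralSeries i⁆, (⊤ : Subgroup G)⁆
          ≤ ⁅Subgroup.upperCentralSeries G (m + 1), (⊤ : Subgroup G)⁆ := by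
            apply Subgroup.commutator_mono _ le_rfl
            rw [hidx, Subgroup.commutator_comm]
            exact ih (m + 1)
        _ = ⁅(⊤ : Subgroup G), Subgroup.upperCentralSeries G (m + 1)⁆ := Subgroup.commutator_comm _ _
        _ ≤ Subgroup.upperCentralSeries G m := top_ucs_le m

/-- Easy direction: `K ∩ Z_i(G) ≤ ζ_i(K)`. -/
private lemma mem_ucs_of_coe {G : Type*} [Group G] (K : Subgroup G) :
    ∀ i : ℕ, ∀ x : K, (x : G) ∈ Subgroup.upperCentralSeries G i → x ∈ Subgroup.upperCentralSeries K i := by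
  intro i
  induction i with
  | zero =>
    intro x hx
    rw [upperCentralSeries_zero, Subgroup.mem_bot] at hx ⊢
    exact Subtype.ext hx
  | succ i ih =>
    intro x hx
    rw [mem_upperCentralSeries_succ_iff] at hx ⊢
    intro y
    exact ih _ (hx (y : G))

/-- Hard direction: under `G = K·Z_n(G)`, elements of `ζ_i(K) ∩ γ_{n-i}(G)`
lie in `Z_i(G)`. -/
private lemma key_lemma {G : Type*} [Group G] (K : Subgroup G) (n : ℕ)
    (hKZ : ∀ g : G, ∃ k ∈ K, ∃ z ∈ Subgroup.upperCentralSeries G n, g = k * z) :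
    ∀ i : ℕ, i ≤ n → ∀ x : K, x ∈ Subgroup.upperCentralSeries K i →
      (x : G) ∈ (⊤ : Subgroup G).lowerCentralSeries (n - i) → (x : G) ∈ Subgroup.upperCentralSeries G i := by
  intro i
  induction i with
  | zero =>
    intro _ x hx _
    rw [upperCentralSeries_zero, Subgroup.mem_bot] at hx ⊢
    rw [hx]; rfl
  | succ i ih =>
    intro hin x hx hγ
    rw [mem_upperCentralSeries_succ_iff]
    intro g
    obtain ⟨k, hk, z, hz, rfl⟩ := hKZ g
    have hsub : n - i = (n - (i + 1)) + 1 := by omega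
    -- the K-commutator part
    have hxk : (x : G) * k * (x : G)⁻¹ * k⁻¹ ∈ Subgroup.upperCentralSeries G i := by
      have hc : x * ⟨k, hk⟩ * x⁻¹ * (⟨k, hk⟩ : K)⁻¹ ∈ Subgroup.upperCentralSeries K i :=
        mem_upperCentralSeries_succ_iff.mp hx ⟨k, hk⟩
      have hγ' : (x : G) * k * (x : G)⁻¹ * k⁻¹ ∈ (⊤ : Subgroup G).lowerCentralSeries (n - i) := by
        rw [hsub]
        exact Subgroup.commutator_mem_commutator hγ (Subgroup.mem_top k)
      exact ih (by omega) _ hc hγ'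
    -- the central part
    have hxz : (x : G) * z * (x : G)⁻¹ * z⁻¹ ∈ Subgroup.upperCentralSeries G i := by
      have hidx : i + (n - (i + 1)) + 1 = n := by omega
      have := lcs_ucs_le (G := G) (n - (i + 1)) i
      rw [hidx] at this
      exact this (Subgroup.commutator_mem_commutator hγ hz)
    have hconj : k * ((x : G) * z * (x : G)⁻¹ * z⁻¹) * k⁻¹ ∈ Subgroup.upperCentralSeries G i :=
      (inferInstance : (Subgroup.upperCentralSeries G i).Normal).conj_mem _ hxz k
    have hprod := mul_mem hxk hconj
    have heq : ((x : G) * k * (x : G)⁻¹ * k⁻¹) * (k * ((x : G) * z * (x : G)⁻¹ * z⁻¹) * k⁻¹)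
        = (x : G) * (k * z) * (x : G)⁻¹ * (k * z)⁻¹ := by
      group
    rwa [heq] at hprod

/-- **Hekster's lemma, part 2.** If `G = K·ζ_n(G)` then
`ζ_n(K) = K ⊓ ζ_n(G)`. -/
theorem hekster_upperCentral (G : Type*) [Group G] (K : Subgroup G) (n : ℕ)
    (hn : 0 < n)
    (hKZ : ∀ g : G, ∃ k ∈ K, ∃ z ∈ upperCentralSeries G n, g = k * z) :
    Subgroup.map K.subtype (upperCentralSeries K n) = K ⊓ upperCentralSeries G n := by
  ext g
  simp only [Subgroup.mem_map, Subgroup.mem_inf, Subgroup.coe_subtype]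
  constructor
  · rintro ⟨x, hx, rfl⟩
    refine ⟨x.2, key_lemma K n hKZ n le_rfl x hx ?_⟩
    rw [Nat.sub_self, lowerCentralSeries_zero]
    exact Subgroup.mem_top _
  · rintro ⟨hgK, hgZ⟩
    exact ⟨⟨g, hgK⟩, mem_ucs_of_coe K n _ hgZ, rfl⟩
end

section
/- Let G be a group, R a ring, and A an RG-module having a Z-decomposition A = ζ_{RG}^∞(A) ⊕ E for some RG-hypereccentric submodule E. Then E contains every RG-hypereccentric RG-submodule of A; in particular, the maximal RG-hypereccentric submodule is unique. -/
variable (R : Type*) [Ring R] (G : Type*) [Group G]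
variable (A : Type*) [AddCommGroup A] [Module (MonoidAlgebra R G) A]

/-- `SubModHypercenter R G A B` means that the `RG`-submodule `B` is contained
in some term of the upper `RG`-central series of `A`, whose successive
quotients are defined by `A_{α+1}/A_α = {a + A_α : a(g−1) ∈ A_α for all g}`,
with suprema at limit stages. -/
inductive SubModHypercenter : Submodule (MonoidAlgebra R G) A → Prop
  | bot : SubModHypercenter ⊥
  | step (B C : Submodule (MonoidAlgebra R G) A) : SubModHypercenter B →
      (∀ a ∈ C, ∀ g : G, MonoidAlgebra.of R G g • a - a ∈ B) →
      SubModHypercenter C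
  | sup (s : Set (Submodule (MonoidAlgebra R G) A)) :
      (∀ B ∈ s, SubModHypercenter B) → SubModHypercenter (sSup s)

/-- The upper `RG`-hypercenter `ζ_{RG}^∞(A)`: the last term of the upper
`RG`-central series of `A`. -/
noncomputable def modHypercenter : Submodule (MonoidAlgebra R G) A :=
  sSup {B : Submodule (MonoidAlgebra R G) A | SubModHypercenter R G A B}

/-- An `RG`-submodule `C` of `A` is `RG`-hypereccentric if it admits an
ascending (transfinite) series of `RG`-submodules starting at `0` whose
successive factors are simple `RG`-modules on which `G` acts nontrivially. -/
inductive IsHypereccentric : Submodule (MonoidAlgebra R G) A → Prop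
  | bot : IsHypereccentric ⊥
  | step (B C : Submodule (MonoidAlgebra R G) A) : IsHypereccentric B → B ≤ C →
      IsSimpleModule (MonoidAlgebra R G) (↥C ⧸ Submodule.comap C.subtype B) →
      (∃ g : G, ∃ a ∈ C, MonoidAlgebra.of R G g • a - a ∉ B) →
      IsHypereccentric C
  | sup (s : Set (Submodule (MonoidAlgebra R G) A)) :
      (∀ B ∈ s, IsHypereccentric B) → IsHypereccentric (sSup s)

section Aux

universe uR uG uA

variable {R' : Type uR} [Ring R'] {G' : Type uG} [Group G']
variable {A' : Type uA} [AddCommGroup A'] [Module (MonoidAlgebra R' G') A']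

theorem MonoidAlgebra.smul_eq_single_one_mul (c : R') (f : MonoidAlgebra R' G') :
    c • f = MonoidAlgebra.single (1 : G') c * f := by
  ext x
  rw [MonoidAlgebra.single_one_mul_apply, MonoidAlgebra.coeff_smul_apply, smul_eq_mul]

/-- The next term in the upper central series after `B`. -/
def gStep (B : Submodule (MonoidAlgebra R' G') A') : Submodule (MonoidAlgebra R' G') A' where
  carrier := {a | ∀ g : G', MonoidAlgebra.of R' G' g • a - a ∈ B}
  zero_mem' := by intro g; simp
  add_mem' := by
    intro x y hx hy g
    have h : MonoidAlgebra.of R' G' g • (x + y) - (x + y)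
        = (MonoidAlgebra.of R' G' g • x - x) + (MonoidAlgebra.of R' G' g • y - y) := by
      rw [smul_add]; abel
    rw [h]; exact B.add_mem (hx g) (hy g)
  smul_mem' := by
    intro r x hx
    induction r using MonoidAlgebra.induction_on with
    | of h =>
      intro g
      have hgh : h * (h⁻¹ * g * h) = g * h := by group
      have key : MonoidAlgebra.of R' G' g • (MonoidAlgebra.of R' G' h • x)
            - MonoidAlgebra.of R' G' h • x
          = MonoidAlgebra.of R' G' h • (MonoidAlgebra.of R' G' (h⁻¹ * g * h) • x - x) := by
        rw [smul_sub, smul_smul, smul_smul, ← map_mul, ← map_mul, hgh]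
      rw [key]
      exact B.smul_mem _ (hx (h⁻¹ * g * h))
    | add f₁ f₂ h₁ h₂ =>
      intro g
      have key : MonoidAlgebra.of R' G' g • ((f₁ + f₂) • x) - (f₁ + f₂) • x
          = (MonoidAlgebra.of R' G' g • (f₁ • x) - f₁ • x)
            + (MonoidAlgebra.of R' G' g • (f₂ • x) - f₂ • x) := by
        rw [add_smul, smul_add]; abel
      rw [key]; exact B.add_mem (h₁ g) (h₂ g)
    | smul c f hf =>
      intro g
      have hcomm : MonoidAlgebra.of R' G' g * MonoidAlgebra.single (1 : G') c
          = MonoidAlgebra.single (1 : G') c * MonoidAlgebra.of R' G' g := by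
        simp [MonoidAlgebra.of_apply, MonoidAlgebra.single_mul_single]
      have key : MonoidAlgebra.of R' G' g • ((c • f) • x) - (c • f) • x
          = MonoidAlgebra.single (1 : G') c
              • (MonoidAlgebra.of R' G' g • (f • x) - f • x) := by
        rw [MonoidAlgebra.smul_eq_single_one_mul, mul_smul, smul_sub, smul_smul, hcomm, mul_smul]
      rw [key]
      exact B.smul_mem _ (hf g)

theorem mem_gStep {B : Submodule (MonoidAlgebra R' G') A'} {a : A'} :
    a ∈ gStep B ↔ ∀ g : G', MonoidAlgebra.of R' G' g • a - a ∈ B := Iff.rfl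

theorem gStep_mono {B₁ B₂ : Submodule (MonoidAlgebra R' G') A'} (h : B₁ ≤ B₂) :
    gStep B₁ ≤ gStep B₂ := fun _ ha g => h (ha g)

variable (R' G' A') in
/-- The canonical (ordinal-indexed) upper `RG`-central series. -/
noncomputable def ucSeries (o : Ordinal.{uA}) : Submodule (MonoidAlgebra R' G') A' :=
  ⨆ o' : {o'' : Ordinal.{uA} // o'' < o}, gStep (ucSeries o'.1)
termination_by o
decreasing_by exact o'.2

theorem ucSeries_eq (o : Ordinal.{uA}) :
    ucSeries R' G' A' o
      = ⨆ o' : {o'' : Ordinal.{uA} // o'' < o}, gStep (ucSeries R' G' A' o'.1) := by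
  rw [ucSeries]

theorem ucSeries_mono {o₁ o₂ : Ordinal.{uA}} (h : o₁ ≤ o₂) :
    ucSeries R' G' A' o₁ ≤ ucSeries R' G' A' o₂ := by
  rw [ucSeries_eq o₁, ucSeries_eq o₂]
  exact iSup_le fun o' => le_iSup_of_le ⟨o'.1, lt_of_lt_of_le o'.2 h⟩ le_rfl

theorem subModHypercenter_le_uc {D : Submodule (MonoidAlgebra R' G') A'}
    (hD : SubModHypercenter R' G' A' D) :
    ∃ o : Ordinal.{uA}, D ≤ ucSeries R' G' A' o := by
  induction hD with
  | bot => exact ⟨0, bot_le⟩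
  | step B C hB hstep ih =>
    obtain ⟨o, ho⟩ := ih
    refine ⟨o + 1, ?_⟩
    have hlt : o < o + 1 := by
      rw [Ordinal.add_one_eq_succ]; exact Order.lt_succ o
    rw [ucSeries_eq]
    refine le_trans ?_ (le_iSup (fun o' : {o'' : Ordinal.{uA} // o'' < o + 1} =>
      gStep (ucSeries R' G' A' o'.1)) ⟨o, hlt⟩)
    intro a ha
    exact fun g => ho (hstep a ha g)
  | sup s hs ih =>
    have hch : ∀ B : ↥s, ∃ o : Ordinal.{uA}, (B : Submodule (MonoidAlgebra R' G') A')
        ≤ ucSeries R' G' A' o := fun B => ih B.1 B.2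
    choose f hf using hch
    refine ⟨⨆ B : ↥s, f B, ?_⟩
    apply sSup_le
    intro B hB
    exact le_trans (hf ⟨B, hB⟩)
      (ucSeries_mono (le_ciSup (Ordinal.bddAbove_range _) (⟨B, hB⟩ : ↥s)))

theorem simple_not_le_uc (S : Submodule (MonoidAlgebra R' G') A')
    (hS : IsSimpleModule (MonoidAlgebra R' G') ↥S)
    (hnt : ∃ g : G', ∃ x ∈ S, MonoidAlgebra.of R' G' g • x - x ≠ 0)
    (o : Ordinal.{uA}) : ¬S ≤ ucSeries R' G' A' o := by
  induction o using Ordinal.induction with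
  | h o IH =>
  intro hle
  haveI := hS
  haveI : Nontrivial ↥S := IsSimpleModule.nontrivial (MonoidAlgebra R' G') ↥S
  obtain ⟨a', ha'⟩ := exists_ne (0 : ↥S)
  have hspan : Submodule.span (MonoidAlgebra R' G') {a'} = ⊤ :=
    IsSimpleModule.span_singleton_eq_top _ ha'
  have hSspan : S = Submodule.span (MonoidAlgebra R' G') {(a' : A')} := by
    conv_lhs => rw [← Submodule.map_subtype_top S, ← hspan]
    rw [Submodule.map_span]
    simp
  have haU : (a' : A') ∈ ucSeries R' G' A' o := hle a'.2
  rw [ucSeries_eq] at haU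
  rcases isEmpty_or_nonempty {o'' : Ordinal.{uA} // o'' < o} with he | hne
  · rw [iSup_of_empty] at haU
    exact ha' (Subtype.ext (by simpa using haU))
  · have hdir : Directed (· ≤ ·)
        (fun o' : {o'' : Ordinal.{uA} // o'' < o} => gStep (ucSeries R' G' A' o'.1)) := by
      intro i j
      rcases le_total i.1 j.1 with h | h
      · exact ⟨j, gStep_mono (ucSeries_mono h), le_rfl⟩
      · exact ⟨i, le_rfl, gStep_mono (ucSeries_mono h)⟩
    obtain ⟨o', ho'⟩ := (Submodule.mem_iSup_of_directed _ hdir).1 haU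
    have hSle : S ≤ gStep (ucSeries R' G' A' o'.1) := by
      rw [hSspan]
      exact Submodule.span_le.2 (by simpa using ho')
    rcases eq_bot_or_eq_top (Submodule.comap S.subtype (ucSeries R' G' A' o'.1)) with hb | ht
    · obtain ⟨g, x, hxS, hx⟩ := hnt
      have h1 : MonoidAlgebra.of R' G' g • x - x ∈ ucSeries R' G' A' o'.1 := (hSle hxS) g
      have h2 : MonoidAlgebra.of R' G' g • x - x ∈ S :=
        S.sub_mem (S.smul_mem _ hxS) hxS
      have h3 : (⟨_, h2⟩ : ↥S) ∈ Submodule.comap S.subtype (ucSeries R' G' A' o'.1) := h1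
      rw [hb, Submodule.mem_bot] at h3
      exact hx (by simpa using congrArg Subtype.val h3)
    · refine IH o'.1 o'.2 ?_
      intro x hx
      have hmem : (⟨x, hx⟩ : ↥S) ∈ (⊤ : Submodule (MonoidAlgebra R' G') ↥S) := trivial
      rw [← ht] at hmem
      exact hmem

end Aux

/-- If an `RG`-module `A` has a Z-decomposition
`A = ζ_{RG}^∞(A) ⊕ E` with `E` an `RG`-hypereccentric submodule, then `E`
contains every `RG`-hypereccentric submodule of `A`; in particular the
maximal `RG`-hypereccentric submodule is unique. -/
theorem hypereccentric_le_of_zDecomposition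
    (R : Type*) [Ring R] (G : Type*) [Group G]
    (A : Type*) [AddCommGroup A] [Module (MonoidAlgebra R G) A]
    (E : Submodule (MonoidAlgebra R G) A)
    (hE : IsHypereccentric R G A E)
    (hdec : IsCompl (modHypercenter R G A) E) :
    (∀ C, IsHypereccentric R G A C → C ≤ E) ∧
      (∀ E' : Submodule (MonoidAlgebra R G) A,
        IsHypereccentric R G A E' → (∀ C, IsHypereccentric R G A C → C ≤ E') →
        E' = E) := by
  set Z := modHypercenter R G A with hZ
  have hZhyp : SubModHypercenter R G A Z :=
    SubModHypercenter.sup _ (fun B hB => hB)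
  obtain ⟨oZ, hoZ⟩ := subModHypercenter_le_uc hZhyp
  -- the projection onto Z along E
  set f : A →ₗ[MonoidAlgebra R G] A :=
    Z.subtype.comp (Z.linearProjOfIsCompl E hdec) with hf
  have hker : ∀ x : A, f x = 0 ↔ x ∈ E := by
    intro x
    rw [hf]
    simp only [LinearMap.comp_apply, Submodule.coe_subtype]
    rw [ZeroMemClass.coe_eq_zero]
    exact Submodule.linearProjOfIsCompl_apply_eq_zero_iff hdec
  have hrange : ∀ x : A, f x ∈ Z := fun x => (Z.linearProjOfIsCompl E hdec x).2
  have part1 : ∀ C, IsHypereccentric R G A C → C ≤ E := by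
    intro C hC
    induction hC with
    | bot => exact bot_le
    | sup s hs ih => exact sSup_le ih
    | step B C hB hBC hsimple hwit ihB =>
      haveI := hsimple
      set B' := Submodule.comap C.subtype B with hB'
      set E' := Submodule.comap C.subtype E with hE'
      have hB'E' : B' ≤ E' := Submodule.comap_mono ihB
      rcases eq_bot_or_eq_top (Submodule.map B'.mkQ E') with hKb | hKt
      · -- here E' = B'; derive a contradiction with the hypercenter
        exfalso
        have hE'B' : E' ≤ B' := by
          rw [eq_bot_iff, Submodule.map_le_iff_le_comap, Submodule.comap_bot,
            Submodule.ker_mkQ] at hKb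
          exact hKb
        have hE'eq : E' = B' := le_antisymm hE'B' hB'E'
        set φ : ↥C →ₗ[MonoidAlgebra R G] A := f.comp C.subtype with hφ
        have hkerφ : LinearMap.ker φ = B' := by
          ext x
          rw [LinearMap.mem_ker, hφ, LinearMap.comp_apply, Submodule.coe_subtype, hker]
          rw [← hE'eq]
          rfl
        set S := LinearMap.range φ with hS
        have hSZ : S ≤ Z := by
          rintro _ ⟨x, rfl⟩; exact hrange _
        have hsimpQ : IsSimpleModule (MonoidAlgebra R G) (↥C ⧸ LinearMap.ker φ) := by
          rw [hkerφ]; exact hsimple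
        haveI := hsimpQ
        have hsimpleS : IsSimpleModule (MonoidAlgebra R G) ↥S :=
          IsSimpleModule.congr (φ.quotKerEquivRange).symm
        obtain ⟨g, a, haC, hna⟩ := hwit
        have hmemC : MonoidAlgebra.of R G g • a - a ∈ C :=
          C.sub_mem (C.smul_mem _ haC) haC
        have hfa : φ ⟨a, haC⟩ ∈ S := ⟨_, rfl⟩
        have hsub : MonoidAlgebra.of R G g • (φ ⟨a, haC⟩) - φ ⟨a, haC⟩
            = φ ⟨MonoidAlgebra.of R G g • a - a, hmemC⟩ := by
          rw [← map_smul, ← map_sub]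
          rfl
        have hne : MonoidAlgebra.of R G g • (φ ⟨a, haC⟩) - φ ⟨a, haC⟩ ≠ 0 := by
          rw [hsub]
          intro h0
          have hkm : (⟨MonoidAlgebra.of R G g • a - a, hmemC⟩ : ↥C) ∈ LinearMap.ker φ := h0
          rw [hkerφ] at hkm
          exact hna hkm
        exact simple_not_le_uc S hsimpleS ⟨g, φ ⟨a, haC⟩, hfa, hne⟩ oZ (le_trans hSZ hoZ)
      · -- here C ≤ E
        have htop : E' = ⊤ := by
          have := (Submodule.map_mkQ_eq_top _ _).1 hKt
          rwa [sup_eq_right.2 hB'E'] at this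
        intro x hxC
        have : (⟨x, hxC⟩ : ↥C) ∈ E' := by rw [htop]; trivial
        exact this
  refine ⟨part1, ?_⟩
  intro E' hE' hmax
  exact le_antisymm (part1 E' hE') (hmax E hE)
end

section
/- Let G be a finitely generated group whose hypercenter has finite index. Then the terminal ordinal length of the upper central series of G is finite, i.e. ζ_∞(G) = ζ_n(G) for some finite n. -/
variable (G : Type*) [Group G]

/-- `SubHypercenter G H` means that `H` is contained in some term of the
transfinite upper central series of `G`:  `⊥ = ζ_0` qualifies, any subgroup
`K` with `[K,G] ≤ H` for a qualifying `H` qualifies (successor step), and a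
supremum of qualifying subgroups qualifies (limit step). -/
inductive SubHypercenter : Subgroup G → Prop
  | bot : SubHypercenter ⊥
  | step (H K : Subgroup G) : SubHypercenter H →
      (∀ x ∈ K, ∀ y : G, x * y * x⁻¹ * y⁻¹ ∈ H) → SubHypercenter K
  | sup (s : Set (Subgroup G)) : (∀ H ∈ s, SubHypercenter H) →
      SubHypercenter (sSup s)

/-- The upper hypercenter `ζ_∞(G)`: the last (stable) term of the transfinite
upper central series of `G`. -/
def hypercenter : Subgroup G := sSup {H : Subgroup G | SubHypercenter G H}

/-- A group is hypercentral if it coincides with its upper hypercenter. -/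
def IsHypercentral : Prop := hypercenter G = ⊤

section Aux

variable {G}

/-- For a fixed `x` and a normal subgroup `N`, the set of `y` with
`[x, y] ∈ N` is a subgroup. -/
def commIn (x : G) (N : Subgroup G) [hN : N.Normal] : Subgroup G where
  carrier := {y | x * y * x⁻¹ * y⁻¹ ∈ N}
  one_mem' := by simpa using N.one_mem
  mul_mem' := by
    intro a b ha hb
    have h2 : a * (x * b * x⁻¹ * b⁻¹) * a⁻¹ ∈ N := hN.conj_mem _ hb a
    have h := N.mul_mem ha h2
    have e : (x * a * x⁻¹ * a⁻¹) * (a * (x * b * x⁻¹ * b⁻¹) * a⁻¹)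
        = x * (a * b) * x⁻¹ * (a * b)⁻¹ := by group
    simpa [e] using h
  inv_mem' := by
    intro a ha
    have h := hN.conj_mem _ (N.inv_mem ha) a⁻¹
    rw [inv_inv] at h
    show x * a⁻¹ * x⁻¹ * (a⁻¹)⁻¹ ∈ N
    have e : x * a⁻¹ * x⁻¹ * (a⁻¹)⁻¹ = a⁻¹ * (x * a * x⁻¹ * a⁻¹)⁻¹ * a := by group
    rw [e]; exact h

lemma mem_commIn {x y : G} {N : Subgroup G} [N.Normal] :
    y ∈ commIn x N ↔ x * y * x⁻¹ * y⁻¹ ∈ N := Iff.rfl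

/-- If the commutators of `x` with a generating set all lie in `ζ_n`, then
`x ∈ ζ_{n+1}`. -/
lemma mem_ucs_succ_of_gen {x : G} {n : ℕ} {S : Set G}
    (hS : Subgroup.closure S = ⊤)
    (h : ∀ s ∈ S, x * s * x⁻¹ * s⁻¹ ∈ upperCentralSeries G n) :
    x ∈ upperCentralSeries G (n + 1) := by
  refine mem_upperCentralSeries_succ_iff.2 ?_
  intro y
  have hle : Subgroup.closure S ≤ commIn (hN := (inferInstance : (Subgroup.upperCentralSeries G n).Normal)) x (upperCentralSeries G n) :=
    (Subgroup.closure_le _).2 h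
  rw [hS] at hle
  exact hle (Subgroup.mem_top y)

/-- Each finite term of the upper central series is a `SubHypercenter`. -/
lemma subHypercenter_ucs (n : ℕ) : SubHypercenter G (upperCentralSeries G n) := by
  induction n with
  | zero => exact SubHypercenter.bot
  | succ n ih =>
      exact SubHypercenter.step (upperCentralSeries G n) (upperCentralSeries G (n + 1)) ih
        (fun x hx y => mem_upperCentralSeries_succ_iff.1 hx y)

lemma ucs_le_hypercenter (n : ℕ) : upperCentralSeries G n ≤ hypercenter G :=
  le_sSup (subHypercenter_ucs n)

/-- The union of the finite terms of the upper central series (a subgroup since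
the family is directed). -/
noncomputable def ucsSup (G : Type*) [Group G] : Subgroup G := ⨆ n, upperCentralSeries G n

lemma mem_ucsSup {x : G} : x ∈ ucsSup G ↔ ∃ n, x ∈ upperCentralSeries G n := by
  exact Subgroup.mem_iSup_of_directed (upperCentralSeries_mono G).directed_le

/-- Key lemma: in a finitely generated group, every `SubHypercenter` subgroup is
contained in the union of the finite terms of the upper central series. -/
lemma subHypercenter_le_ucsSup (hfg : Group.FG G) {H : Subgroup G}
    (h : SubHypercenter G H) : H ≤ ucsSup G := by
  obtain ⟨S, hSfin, hSgen⟩ : ∃ S : Set G, S.Finite ∧ Subgroup.closure S = ⊤ := by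
    obtain ⟨S, hS1, hS2⟩ := Group.fg_iff.1 hfg
    exact ⟨S, hS2, hS1⟩
  induction h with
  | bot => exact bot_le
  | step H K _ hcomm ih =>
      intro x hx
      -- each commutator of `x` with a generator lies in `H ≤ ucsSup`
      have hc : ∀ s ∈ S, ∃ n, x * s * x⁻¹ * s⁻¹ ∈ upperCentralSeries G n := by
        intro s _
        exact mem_ucsSup.1 (ih (hcomm x hx s))
      -- choose a common bound using finiteness of `S`
      have : ∃ n, ∀ s ∈ S, x * s * x⁻¹ * s⁻¹ ∈ upperCentralSeries G n := by
        classical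
        choose f hf using fun s (hs : s ∈ S) => hc s hs
        lift S to Finset G using hSfin
        refine ⟨S.attach.sup (fun s => f s.1 s.2), fun s hs => ?_⟩
        exact upperCentralSeries_mono G
          (Finset.le_sup (f := fun t : {t // t ∈ S} => f t.1 t.2)
            (Finset.mem_attach S ⟨s, hs⟩)) (hf s hs)
      obtain ⟨n, hn⟩ := this
      exact mem_ucsSup.2 ⟨n + 1, mem_ucs_succ_of_gen hSgen hn⟩
  | sup s _ ih => exact sSup_le fun H hH => ih H hH

end Aux

/-- If `G` is finitely generated and its upper hypercenter has finite index,
then the transfinite upper central series stabilizes at a finite stage: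
`ζ_∞(G) = ζ_n(G)` for some `n`. -/
theorem hypercenter_eq_upperCentralSeries_of_fg (G : Type*) [Group G]
    (hfg : Group.FG G) (hfin : Finite (G ⧸ hypercenter G)) :
    ∃ n : ℕ, hypercenter G = upperCentralSeries G n := by
  classical
  set Z := hypercenter G with hZ
  -- the hypercenter lies in the union of the finite terms
  have hZle : Z ≤ ucsSup G :=
    sSup_le fun H hH => subHypercenter_le_ucsSup hfg hH
  -- Z has finite index, hence is finitely generated (Schreier)
  haveI : Z.FiniteIndex := Subgroup.finiteIndex_of_finite_quotient (H := Z)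
  haveI : Group.FG G := hfg
  haveI : Group.FG Z := Subgroup.fg_of_index_ne_zero Z
  have hZfg : Z.FG := (Group.fg_iff_subgroup_fg Z).1 ‹Group.FG Z›
  obtain ⟨T, hT⟩ : ∃ T : Finset G, Subgroup.closure (T : Set G) = Z := hZfg
  -- each generator of Z lies in some finite term; take a common bound
  have hTmem : ∀ t ∈ T, ∃ n, t ∈ upperCentralSeries G n := by
    intro t ht
    exact mem_ucsSup.1 (hZle (hT ▸ Subgroup.subset_closure ht))
  choose f hf using fun t (ht : t ∈ T) => hTmem t ht
  refine ⟨T.attach.sup (fun t => f t.1 t.2), le_antisymm ?_ (ucs_le_hypercenter _)⟩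
  rw [← hT]
  refine (Subgroup.closure_le _).2 fun t ht => ?_
  exact upperCentralSeries_mono G
    (Finset.le_sup (f := fun s : {s // s ∈ T} => f s.1 s.2)
      (Finset.mem_attach T ⟨t, ht⟩)) (hf t ht)
end

section
/- Let G be a group with a finite normal subgroup L such that G/L is locally nilpotent, and suppose G has a normal subgroup Z contained in the hypercenter of G with G/Z finite. Then G/L is hypercentral. -/
variable (G : Type*) [Group G]

section Aux

variable {G} {G' : Type*} [Group G']

/-- The image of a sub-hypercentral subgroup under a surjective homomorphism is
sub-hypercentral. -/
lemma SubHypercenter.map (f : G →* G') (hf : Function.Surjective f)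
    {H : Subgroup G} (h : SubHypercenter G H) : SubHypercenter G' (H.map f) := by
  induction h with
  | bot => rw [Subgroup.map_bot]; exact .bot
  | step H K _ hcomm ih =>
      refine .step _ (K.map f) ih ?_
      rintro x ⟨a, ha, rfl⟩ y
      obtain ⟨b, rfl⟩ := hf y
      exact ⟨a * b * a⁻¹ * b⁻¹, hcomm a ha b, by simp⟩
  | sup s _ ih =>
      have : (sSup s).map f = sSup (Subgroup.map f '' s) := by
        rw [sSup_image]
        exact (Subgroup.gc_map_comap f).l_sSup
      rw [this]
      refine .sup _ ?_
      rintro H' ⟨H, hH, rfl⟩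
      exact ih H hH

lemma subHypercenter_hypercenter : SubHypercenter G (hypercenter G) :=
  .sup _ fun _ h => h

lemma hypercenter_normal : (hypercenter G).Normal := by
  constructor
  intro n hn g
  have h1 : SubHypercenter G ((hypercenter G).map (MulAut.conj g).toMonoidHom) :=
    SubHypercenter.map _ (MulAut.conj g).surjective subHypercenter_hypercenter
  have h2 : (hypercenter G).map (MulAut.conj g).toMonoidHom ≤ hypercenter G :=
    le_sSup h1
  exact h2 ⟨n, hn, by simp⟩

/-- For a normal subgroup `H`, the set of `x` with `[x,y] ∈ H` for all `y` is a
subgroup (the preimage of the center of `G/H`). -/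
def commLeft (H : Subgroup G) (hH : H.Normal) : Subgroup G where
  carrier := {x | ∀ y : G, x * y * x⁻¹ * y⁻¹ ∈ H}
  one_mem' := by intro y; simpa using H.one_mem
  mul_mem' := by
    intro a b ha hb y
    have h : a * b * y * (a * b)⁻¹ * y⁻¹ =
        a * (b * y * b⁻¹ * y⁻¹) * a⁻¹ * (a * y * a⁻¹ * y⁻¹) := by group
    rw [h]
    exact H.mul_mem (hH.conj_mem _ (hb y) a) (ha y)
  inv_mem' := by
    intro a ha y
    have h : a⁻¹ * y * a⁻¹⁻¹ * y⁻¹ = a⁻¹ * (a * y * a⁻¹ * y⁻¹)⁻¹ * a⁻¹⁻¹ := by group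
    rw [h]
    exact hH.conj_mem _ (H.inv_mem (ha y)) a⁻¹

/-- For a normal subgroup `H` and fixed `x`, the set of `y` with `[x,y] ∈ H` is a
subgroup. -/
def commRight (x : G) (H : Subgroup G) (hH : H.Normal) : Subgroup G where
  carrier := {y | x * y * x⁻¹ * y⁻¹ ∈ H}
  one_mem' := by simpa using H.one_mem
  mul_mem' := by
    intro a b ha hb
    have h : x * (a * b) * x⁻¹ * (a * b)⁻¹ =
        (x * a * x⁻¹ * a⁻¹) * (a * (x * b * x⁻¹ * b⁻¹) * a⁻¹) := by group
    show x * (a * b) * x⁻¹ * (a * b)⁻¹ ∈ H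
    rw [h]
    exact H.mul_mem ha (hH.conj_mem _ hb a)
  inv_mem' := by
    intro a ha
    have h : x * a⁻¹ * x⁻¹ * a⁻¹⁻¹ = a⁻¹ * (x * a * x⁻¹ * a⁻¹)⁻¹ * a⁻¹⁻¹ := by group
    show x * a⁻¹ * x⁻¹ * a⁻¹⁻¹ ∈ H
    rw [h]
    exact hH.conj_mem _ (H.inv_mem ha) a⁻¹

/-- Core lemma: if `F` is a nilpotent subgroup with `F ⊔ ζ_∞(G) = ⊤`, then `G`
is hypercentral. -/
lemma isHypercentral_of_nilpotent_sup (F : Subgroup G) (hF : Group.IsNilpotent F)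
    (hsup : F ⊔ hypercenter G = ⊤) : IsHypercentral G := by
  set ζ : Subgroup G := hypercenter G with hζdef
  have hζn : ζ.Normal := hypercenter_normal
  obtain ⟨n, hn⟩ := hF.nilpotent
  set A : ℕ → Subgroup G := fun i => (Subgroup.upperCentralSeries F i).map F.subtype with hA
  -- each A i ⊔ ζ is sub-hypercentral
  have key : ∀ i, SubHypercenter G (A i ⊔ ζ) := by
    intro i
    induction i with
    | zero =>
        have : A 0 ⊔ ζ = ζ := by
          simp [hA, upperCentralSeries_zero, Subgroup.map_bot]
        rw [this]
        exact subHypercenter_hypercenter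
    | succ i ih =>
        -- H := A i ⊔ ζ is normal
        have hmapζ : ∀ g : G, ζ.map (MulAut.conj g).toMonoidHom ≤ ζ := by
          rintro g x ⟨z, hz, rfl⟩
          simpa using hζn.conj_mem z hz g
        have hnorm : (A i ⊔ ζ).Normal := by
          rw [← Subgroup.normalizer_eq_top_iff, eq_top_iff, ← hsup]
          have hconj : ∀ g : G, (A i ⊔ ζ).map (MulAut.conj g).toMonoidHom ≤ A i ⊔ ζ →
              ∀ h : G, h ∈ A i ⊔ ζ → g * h * g⁻¹ ∈ A i ⊔ ζ := by
            intro g hg h hh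
            have := hg ⟨h, hh, rfl⟩
            simpa using this
          refine sup_le ?_ ?_
          · -- F normalizes
            intro f hf
            have haux : ∀ f' ∈ F, (A i ⊔ ζ).map (MulAut.conj f').toMonoidHom ≤ A i ⊔ ζ := by
              intro f' hf'
              rw [Subgroup.map_sup]
              refine sup_le (le_trans ?_ le_sup_left) (le_trans (hmapζ f') le_sup_right)
              rintro x ⟨a, ⟨a', ha', rfl⟩, rfl⟩
              refine ⟨⟨f', hf'⟩ * a' * ⟨f', hf'⟩⁻¹,
                (inferInstance : (Subgroup.upperCentralSeries F i).Normal).conj_mem a' ha' ⟨f', hf'⟩, ?_⟩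
              simp
            rw [Subgroup.mem_normalizer_iff]
            intro h
            constructor
            · exact fun hh => hconj f (haux f hf) h hh
            · intro hh
              have := hconj f⁻¹ (haux f⁻¹ (F.inv_mem hf)) _ hh
              simpa [mul_assoc] using this
          · -- ζ normalizes
            intro z hz
            have haux : ∀ z' ∈ ζ, (A i ⊔ ζ).map (MulAut.conj z').toMonoidHom ≤ A i ⊔ ζ := by
              intro z' hz'
              rw [Subgroup.map_sup]
              refine sup_le ?_ (le_trans (hmapζ z') le_sup_right)
              rintro x ⟨a, ha, rfl⟩
              have h1 : z' * a * z'⁻¹ = (z' * a * z'⁻¹ * a⁻¹) * a := by group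
              have h2 : z' * a * z'⁻¹ * a⁻¹ ∈ ζ := by
                have h3 : z' * a * z'⁻¹ * a⁻¹ = z' * (a * z'⁻¹ * a⁻¹) := by group
                rw [h3]
                exact ζ.mul_mem hz' (hζn.conj_mem _ (ζ.inv_mem hz') a)
              simp only [MulEquiv.coe_toMonoidHom, MulAut.conj_apply]
              rw [h1]
              exact (A i ⊔ ζ).mul_mem (Subgroup.mem_sup_right h2) (Subgroup.mem_sup_left ha)
            rw [Subgroup.mem_normalizer_iff]
            intro h
            constructor
            · exact fun hh => hconj z (haux z hz) h hh
            · intro hh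
              have := hconj z⁻¹ (haux z⁻¹ (ζ.inv_mem hz)) _ hh
              simpa [mul_assoc] using this
        -- now the step
        refine SubHypercenter.step (A i ⊔ ζ) _ ih ?_
        have hle : A (i + 1) ⊔ ζ ≤ commLeft (A i ⊔ ζ) hnorm := by
          refine sup_le ?_ ?_
          · rintro x ⟨x', hx', rfl⟩
            intro y
            -- show all y satisfy the commutator condition, using ⊤ = F ⊔ ζ
            have hy : y ∈ commRight (F.subtype x') (A i ⊔ ζ) hnorm := by
              have hT : (⊤ : Subgroup G) ≤ commRight (F.subtype x') (A i ⊔ ζ) hnorm := by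
                rw [← hsup]
                refine sup_le ?_ ?_
                · intro f hf
                  show F.subtype x' * f * (F.subtype x')⁻¹ * f⁻¹ ∈ A i ⊔ ζ
                  refine Subgroup.mem_sup_left ?_
                  refine ⟨x' * ⟨f, hf⟩ * x'⁻¹ * ⟨f, hf⟩⁻¹,
                    mem_upperCentralSeries_succ_iff.mp hx' ⟨f, hf⟩, ?_⟩
                  simp
                · intro z hz
                  show F.subtype x' * z * (F.subtype x')⁻¹ * z⁻¹ ∈ A i ⊔ ζ
                  refine Subgroup.mem_sup_right ?_
                  have h3 : F.subtype x' * z * (F.subtype x')⁻¹ * z⁻¹ =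
                      (F.subtype x' * z * (F.subtype x')⁻¹) * z⁻¹ := by group
                  rw [h3]
                  exact ζ.mul_mem (hζn.conj_mem _ hz _) (ζ.inv_mem hz)
              exact hT (Subgroup.mem_top y)
            exact hy
          · intro z hz y
            refine Subgroup.mem_sup_right ?_
            have h3 : z * y * z⁻¹ * y⁻¹ = z * (y * z⁻¹ * y⁻¹) := by group
            rw [h3]
            exact ζ.mul_mem hz (hζn.conj_mem _ (ζ.inv_mem hz) y)
        exact fun x hx y => hle hx y
  -- conclude
  have hAn : A n = F := by
    rw [hA]
    simp only [hn]
    rw [← MonoidHom.range_eq_map, F.range_subtype]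
  have htop : SubHypercenter G (⊤ : Subgroup G) := by
    have := key n
    rwa [hAn, hsup] at this
  exact le_antisymm le_top (le_sSup htop)

end Aux

/-- Final step of the proof of Theorem B.  If `L` is a finite normal subgroup
of `G` with `G/L` locally nilpotent, and `G` has a normal subgroup `Z`
contained in its hypercenter with `G/Z` finite, then `G/L` is hypercentral. -/
theorem quotient_hypercentral (G : Type*) [Group G]
    (L : Subgroup G) (hLn : L.Normal) [Finite L]
    (hloc : ∀ S : Subgroup (G ⧸ L), S.FG → Group.IsNilpotent S)
    (Z : Subgroup G) (hZn : Z.Normal) (hZ : Z ≤ hypercenter G)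
    (hfin : Finite (G ⧸ Z)) :
    IsHypercentral (G ⧸ L) := by
  set Q := G ⧸ L
  set Zb : Subgroup Q := Z.map (QuotientGroup.mk' L) with hZb
  haveI hZbn : Zb.Normal := hZn.map _ (QuotientGroup.mk'_surjective L)
  -- Zb is contained in the hypercenter of Q
  have hZbζ : Zb ≤ hypercenter Q := by
    refine le_trans (Subgroup.map_mono hZ) ?_
    exact le_sSup (SubHypercenter.map _ (QuotientGroup.mk'_surjective L)
      subHypercenter_hypercenter)
  -- Q ⧸ Zb is finite
  haveI hfinQ : Finite (Q ⧸ Zb) := by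
    have hker : ∀ z ∈ Z, ((QuotientGroup.mk' Zb).comp (QuotientGroup.mk' L)) z = 1 := by
      intro z hz
      simp only [MonoidHom.comp_apply]
      rw [← (QuotientGroup.mk' Zb).mem_ker, QuotientGroup.ker_mk']
      exact ⟨z, hz, rfl⟩
    have hsurj : Function.Surjective
        (QuotientGroup.lift Z ((QuotientGroup.mk' Zb).comp (QuotientGroup.mk' L)) hker) := by
      intro q
      obtain ⟨g, rfl⟩ := (QuotientGroup.mk'_surjective Zb).comp
        (QuotientGroup.mk'_surjective L) q
      exact ⟨QuotientGroup.mk g, rfl⟩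
    exact Finite.of_surjective _ hsurj
  -- build a finitely generated subgroup F with F ⊔ Zb = ⊤
  set F : Subgroup Q := Subgroup.closure (Set.range (Quotient.out : Q ⧸ Zb → Q)) with hF
  have hFfg : F.FG := by
    rw [Subgroup.fg_iff]
    exact ⟨_, rfl, Set.finite_range _⟩
  have hFZ : F ⊔ Zb = ⊤ := by
    rw [eq_top_iff]
    intro q _
    have h1 : (QuotientGroup.mk q : Q ⧸ Zb).out ∈ F :=
      Subgroup.subset_closure ⟨QuotientGroup.mk q, rfl⟩
    have h2 : ((QuotientGroup.mk q : Q ⧸ Zb).out)⁻¹ * q ∈ Zb :=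
      QuotientGroup.eq.mp (QuotientGroup.out_eq' _)
    have : q = (QuotientGroup.mk q : Q ⧸ Zb).out *
        (((QuotientGroup.mk q : Q ⧸ Zb).out)⁻¹ * q) := by group
    rw [this]
    exact Subgroup.mul_mem_sup h1 h2
  have hsup : F ⊔ hypercenter Q = ⊤ := by
    rw [eq_top_iff, ← hFZ]
    exact sup_le le_sup_left (le_trans hZbζ le_sup_right)
  exact isHypercentral_of_nilpotent_sup F (hloc F hFfg) hsup
end

section
/- Every finitely generated FC-hypercentral group is nilpotent-by-finite. -/
universe u

variable (G : Type*) [Group G]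

/-- `SubFCHypercenter G H` means that `H` is contained in some term of the
transfinite upper FC-central series of `G`: `⊥` qualifies; if `H` qualifies
and every element of `K` has finitely many conjugates modulo `H` (i.e. its
conjugacy class has finite image in the coset space `G/H`), then `K`
qualifies; and a supremum of qualifying subgroups qualifies. -/
inductive SubFCHypercenter : Subgroup G → Prop
  | bot : SubFCHypercenter ⊥
  | step (H K : Subgroup G) : SubFCHypercenter H →
      (∀ x ∈ K,
        Set.Finite ((QuotientGroup.mk : G → G ⧸ H) ''
          {z : G | ∃ g : G, z = g * x * g⁻¹})) →
      SubFCHypercenter K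
  | sup (s : Set (Subgroup G)) : (∀ H ∈ s, SubFCHypercenter H) →
      SubFCHypercenter (sSup s)

/-- A group is FC-hypercentral if it coincides with the last term of its
upper FC-central series. -/
def IsFCHypercentral : Prop :=
  sSup {H : Subgroup G | SubFCHypercenter G H} = ⊤

namespace FCHAux

open Pointwise
open commutatorElement

variable {G : Type u} [Group G]

/-- Conjugacy class of `x`. -/
def cclass (x : G) : Set G := {z : G | ∃ g : G, z = g * x * g⁻¹}

lemma self_mem_cclass (x : G) : x ∈ cclass x := ⟨1, by group⟩

lemma cclass_conj (g x : G) : cclass (g * x * g⁻¹) = cclass x := by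
  ext z
  constructor
  · rintro ⟨h, rfl⟩; exact ⟨h * g, by group⟩
  · rintro ⟨h, rfl⟩; exact ⟨h * g⁻¹, by group⟩

/-- The set of elements whose conjugacy class has finite image in `G ⧸ H`. -/
def Sset (H : Subgroup G) : Set G :=
  {x : G | Set.Finite ((QuotientGroup.mk : G → G ⧸ H) '' cclass x)}

lemma Sset_mono {H H' : Subgroup G} (h : H ≤ H') : Sset H ⊆ Sset H' := by
  intro x hx
  have hfin : Set.Finite ((QuotientGroup.mk : G → G ⧸ H) '' cclass x) := hx
  let φ : G ⧸ H → G ⧸ H' := fun q =>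
    Quotient.liftOn' q (QuotientGroup.mk : G → G ⧸ H')
      (fun a b hab => by
        rw [QuotientGroup.leftRel_apply] at hab
        exact (QuotientGroup.eq).mpr (h hab))
  have himg : (QuotientGroup.mk : G → G ⧸ H') '' cclass x
      = φ '' ((QuotientGroup.mk : G → G ⧸ H) '' cclass x) := by
    rw [Set.image_image]
    rfl
  show Set.Finite ((QuotientGroup.mk : G → G ⧸ H') '' cclass x)
  rw [himg]
  exact hfin.image φ

lemma sset_conj_mem {H : Subgroup G} {x : G} (hx : x ∈ Sset H) (g : G) :
    g * x * g⁻¹ ∈ Sset H := by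
  show Set.Finite _
  rw [show cclass (g * x * g⁻¹) = cclass x from cclass_conj g x]
  exact hx

/-- For a normal subgroup `N`, `Sset N` is a subgroup. -/
def FCpre (N : Subgroup G) [N.Normal] : Subgroup G where
  carrier := Sset N
  one_mem' := by
    have hsub : cclass (1 : G) ⊆ {1} := by
      rintro z ⟨g, rfl⟩; simp
    exact Set.Finite.image _ ((Set.finite_singleton _).subset hsub)
  mul_mem' := by
    intro a b ha hb
    have hsub : (QuotientGroup.mk : G → G ⧸ N) '' cclass (a * b) ⊆
        ((QuotientGroup.mk : G → G ⧸ N) '' cclass a) *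
        ((QuotientGroup.mk : G → G ⧸ N) '' cclass b) := by
      rintro z ⟨w, ⟨g, rfl⟩, rfl⟩
      have h1 : (QuotientGroup.mk (g * (a * b) * g⁻¹) : G ⧸ N)
          = QuotientGroup.mk (g * a * g⁻¹) * QuotientGroup.mk (g * b * g⁻¹) := by
        rw [← QuotientGroup.mk_mul]
        congr 1
        group
      rw [h1]
      exact Set.mul_mem_mul (Set.mem_image_of_mem _ ⟨g, rfl⟩)
        (Set.mem_image_of_mem _ ⟨g, rfl⟩)
    exact (Set.Finite.mul ha hb).subset hsub
  inv_mem' := by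
    intro a ha
    have hsub : (QuotientGroup.mk : G → G ⧸ N) '' cclass a⁻¹ ⊆
        ((QuotientGroup.mk : G → G ⧸ N) '' cclass a)⁻¹ := by
      rintro z ⟨w, ⟨g, rfl⟩, rfl⟩
      have h1 : (QuotientGroup.mk (g * a⁻¹ * g⁻¹) : G ⧸ N)
          = (QuotientGroup.mk (g * a * g⁻¹) : G ⧸ N)⁻¹ := by
        rw [← QuotientGroup.mk_inv]
        congr 1
        group
      rw [h1]
      exact Set.inv_mem_inv.mpr (Set.mem_image_of_mem _ ⟨g, rfl⟩)
    exact (Set.Finite.inv ha).subset hsub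

instance FCpre_normal (N : Subgroup G) [N.Normal] : (FCpre N).Normal :=
  ⟨fun x hx g => sset_conj_mem hx g⟩

/-- One step of the canonical FC-central series. -/
def Tstep (H : Subgroup G) : Subgroup G := Subgroup.normalClosure (Sset H)

lemma Tstep_normal (H : Subgroup G) : (Tstep H).Normal :=
  Subgroup.normalClosure_normal

lemma Tstep_mono {H H' : Subgroup G} (h : H ≤ H') : Tstep H ≤ Tstep H' :=
  Subgroup.normalClosure_mono (Sset_mono h)

lemma Sset_subset_Tstep (H : Subgroup G) : Sset H ⊆ Tstep H :=
  Subgroup.subset_normalClosure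

lemma mem_Sset_of_mem_Tstep {N : Subgroup G} [N.Normal] {x : G}
    (hx : x ∈ Tstep N) : x ∈ Sset N := by
  have h : Tstep N ≤ FCpre N :=
    Subgroup.normalClosure_le_normal (fun y hy => hy)
  exact h hx

/-- The canonical (ordinal-indexed) FC-central series of `G`. -/
noncomputable def Fc (o : Ordinal.{u}) : Subgroup G :=
  ⨆ β : {β : Ordinal.{u} // β < o}, Tstep (Fc β.1)
termination_by o
decreasing_by exact β.2

lemma Fc_def (o : Ordinal.{u}) :
    Fc (G := G) o = ⨆ β : {β : Ordinal.{u} // β < o}, Tstep (Fc (G := G) β.1) := by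
  rw [Fc]

lemma normal_iSup {ι : Sort*} (K : ι → Subgroup G) (h : ∀ i, (K i).Normal) :
    (⨆ i, K i).Normal := by
  constructor
  intro n hn g
  have hmap : Subgroup.map (MulAut.conj g).toMonoidHom (⨆ i, K i)
      = ⨆ i, Subgroup.map (MulAut.conj g).toMonoidHom (K i) :=
    (Subgroup.gc_map_comap _).l_iSup
  have heq : ∀ i, Subgroup.map (MulAut.conj g).toMonoidHom (K i) = K i := by
    intro i
    ext x
    simp only [Subgroup.mem_map]
    constructor
    · rintro ⟨y, hy, rfl⟩
      simpa [MulAut.conj] using (h i).conj_mem y hy g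
    · intro hx
      exact ⟨g⁻¹ * x * g, (by simpa using (h i).conj_mem x hx g⁻¹), by
        simp [MulAut.conj]; group⟩
  have hmem : g * n * g⁻¹ ∈ Subgroup.map (MulAut.conj g).toMonoidHom (⨆ i, K i) :=
    ⟨n, hn, by simp [MulAut.conj]⟩
  rw [hmap, iSup_congr heq] at hmem
  exact hmem

lemma Fc_normal (o : Ordinal.{u}) : (Fc (G := G) o).Normal := by
  rw [Fc_def]
  exact normal_iSup _ (fun β => Tstep_normal _)

lemma Fc_mono : Monotone (Fc (G := G)) := by
  intro a b hab
  rw [Fc_def a, Fc_def b]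
  exact iSup_le fun β => le_iSup_of_le ⟨β.1, lt_of_lt_of_le β.2 hab⟩ le_rfl

lemma Tstep_Fc_le_succ (β : Ordinal.{u}) :
    Tstep (Fc (G := G) β) ≤ Fc (G := G) (β + 1) := by
  rw [Fc_def (β + 1)]
  exact le_iSup_of_le ⟨β, by exact Order.lt_succ β⟩ le_rfl

/-- Every subgroup in the transfinite FC-series is below some canonical term. -/
lemma exists_le_Fc {H : Subgroup G} (h : SubFCHypercenter G H) :
    ∃ o : Ordinal.{u}, H ≤ Fc (G := G) o := by
  induction h with
  | bot => exact ⟨0, bot_le⟩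
  | step H K hH hK ih =>
    obtain ⟨o, ho⟩ := ih
    refine ⟨o + 1, ?_⟩
    intro x hx
    have h1 : x ∈ Sset H := hK x hx
    have h2 : x ∈ Sset (Fc (G := G) o) := Sset_mono ho h1
    exact Tstep_Fc_le_succ o (Sset_subset_Tstep _ h2)
  | sup s hs ih =>
    choose f hf using ih
    refine ⟨⨆ H : s, f H.1 H.2, sSup_le fun H hH => ?_⟩
    refine le_trans (hf H hH) (Fc_mono ?_)
    exact le_ciSup (Ordinal.bddAbove_range _) (⟨H, hH⟩ : s)

/-- A "nilpotent chain" for a normal subgroup `M`: a finite chain of normal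
subgroups from `M` to `⊥` whose factors are centralized by a fixed normal
subgroup of finite index. -/
def NilpChain (M : Subgroup G) : Prop :=
  ∃ (D : Subgroup G) (f : ℕ → Subgroup G) (n : ℕ),
    D.Normal ∧ D.FiniteIndex ∧ (∀ j, (f j).Normal) ∧ f 0 = M ∧
    (∀ j, ⁅f j, D⁆ ≤ f (j + 1)) ∧ f n = ⊥

def KeyProp (N : Subgroup G) : Prop :=
  ∀ X : Set G, X.Finite → X ⊆ (N : Set G) →
    NilpChain (Subgroup.normalClosure X)

lemma nilpChain_bot : NilpChain (⊥ : Subgroup G) := by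
  refine ⟨⊤, fun _ => ⊥, 0, inferInstance, inferInstance, fun j => inferInstance, rfl, ?_, rfl⟩
  intro j
  refine Subgroup.commutator_le.mpr ?_
  intro g₁ hg₁ g₂ _
  have : g₁ = 1 := hg₁
  subst this
  simp

/-- Auxiliary subgroup: elements whose commutators with `W` all lie in `M'`. -/
def commA (W M' : Subgroup G) [M'.Normal] : Subgroup G where
  carrier := {m : G | ∀ w ∈ W, ⁅m, w⁆ ∈ M'}
  one_mem' := by
    intro w hw
    have : ⁅(1 : G), w⁆ = 1 := by group
    rw [this]
    exact M'.one_mem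
  mul_mem' := by
    intro m₁ m₂ h₁ h₂ w hw
    have hid : ⁅m₁ * m₂, w⁆ = m₁ * ⁅m₂, w⁆ * m₁⁻¹ * ⁅m₁, w⁆ := by group
    rw [hid]
    exact M'.mul_mem (Subgroup.Normal.conj_mem ‹M'.Normal› _ (h₂ w hw) m₁) (h₁ w hw)
  inv_mem' := by
    intro m hm w hw
    have hid : ⁅m⁻¹, w⁆ = m⁻¹ * ⁅m, w⁆⁻¹ * m := by group
    rw [hid]
    have h1 : ⁅m, w⁆⁻¹ ∈ M' := M'.inv_mem (hm w hw)
    have := Subgroup.Normal.conj_mem ‹M'.Normal› _ h1 m⁻¹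
    simpa using this

lemma mem_commA_iff {W M' : Subgroup G} [M'.Normal] {m : G} :
    m ∈ commA W M' ↔ ∀ w ∈ W, ⁅m, w⁆ ∈ M' := Iff.rfl

lemma commA_normal {W M' : Subgroup G} [M'.Normal] (hW : W.Normal) :
    (commA W M').Normal := by
  constructor
  intro m hm g w hw
  have hid : ⁅g * m * g⁻¹, w⁆ = g * ⁅m, g⁻¹ * w * g⁆ * g⁻¹ := by group
  rw [hid]
  have hw' : g⁻¹ * w * g ∈ W := by simpa using hW.conj_mem w hw g⁻¹
  exact Subgroup.Normal.conj_mem ‹M'.Normal› _ (hm _ hw') g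

/-- Finite-index of the centralizer of a finite conjugation-invariant set. -/
lemma centralizer_finiteIndex {Q : Type*} [Group Q] {C : Set Q} (hfin : C.Finite)
    (hconj : ∀ z ∈ C, ∀ q : Q, q * z * q⁻¹ ∈ C) :
    (Subgroup.centralizer C).FiniteIndex := by
  classical
  haveI : Finite ↥C := hfin.to_subtype
  let χ : Q → (↥C → ↥C) := fun q c => ⟨q * c.1 * q⁻¹, hconj c.1 c.2 q⟩
  have hresp : ∀ a b : Q, (QuotientGroup.leftRel (Subgroup.centralizer C)) a b → χ a = χ b := by
    intro a b hab
    rw [QuotientGroup.leftRel_apply] at hab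
    funext c
    apply Subtype.ext
    show a * c.1 * a⁻¹ = b * c.1 * b⁻¹
    have hcomm : c.1 * (a⁻¹ * b) = (a⁻¹ * b) * c.1 :=
      (Subgroup.mem_centralizer_iff.mp hab c.1 c.2)
    calc a * c.1 * a⁻¹ = a * (c.1 * (a⁻¹ * b)) * b⁻¹ := by group
      _ = a * ((a⁻¹ * b) * c.1) * b⁻¹ := by rw [hcomm]
      _ = b * c.1 * b⁻¹ := by group
  let ψ : Q ⧸ Subgroup.centralizer C → (↥C → ↥C) :=
    fun q => Quotient.liftOn' q χ hresp
  have hinj : Function.Injective ψ := by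
    intro a b
    induction a using Quotient.inductionOn' with
    | h a =>
    induction b using Quotient.inductionOn' with
    | h b =>
    intro hab
    have hab' : χ a = χ b := hab
    apply Quotient.sound'
    rw [QuotientGroup.leftRel_apply]
    rw [Subgroup.mem_centralizer_iff]
    intro c hc
    have := congrFun hab' ⟨c, hc⟩
    have heq : a * c * a⁻¹ = b * c * b⁻¹ := congrArg Subtype.val this
    have : c = a⁻¹ * (b * c * b⁻¹) * a := by
      rw [← heq]; group
    calc c * (a⁻¹ * b) = (a⁻¹ * (b * c * b⁻¹) * a) * (a⁻¹ * b) := by rw [← this]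
      _ = a⁻¹ * b * c := by group
      _ = (a⁻¹ * b) * c := by group
  haveI : Finite (Q ⧸ Subgroup.centralizer C) := Finite.of_injective ψ hinj
  exact Subgroup.finiteIndex_of_finite_quotient

lemma centralizer_normal {Q : Type*} [Group Q] {C : Set Q}
    (hconj : ∀ z ∈ C, ∀ q : Q, q * z * q⁻¹ ∈ C) :
    (Subgroup.centralizer C).Normal := by
  constructor
  intro w hw g
  rw [Subgroup.mem_centralizer_iff] at hw ⊢
  intro c hc
  have hc' : g⁻¹ * c * g ∈ C := by simpa using hconj c hc g⁻¹
  have h1 := hw _ hc'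
  calc c * (g * w * g⁻¹) = g * ((g⁻¹ * c * g) * w) * g⁻¹ := by group
    _ = g * (w * (g⁻¹ * c * g)) * g⁻¹ := by rw [h1]
    _ = (g * w * g⁻¹) * c := by group

/-- The main step: reduce a finite subset of `Sset N` to a finite subset of `N`. -/
lemma step_key (hfg : Group.FG G) {N : Subgroup G} (hN : N.Normal) (hKey : KeyProp N)
    (X : Set G) (hXfin : X.Finite) (hX : X ⊆ Sset N) :
    NilpChain (Subgroup.normalClosure X) := by
  classical
  haveI := hN
  let π : G →* G ⧸ N := QuotientGroup.mk' N
  -- the (finite, conjugation-invariant) set of conjugates of images of `X`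
  let C : Set (G ⧸ N) := ⋃ x ∈ X, cclass (π x)
  have hclass_eq : ∀ x : G, cclass (π x) = π '' cclass x := by
    intro x
    ext z
    constructor
    · rintro ⟨q, rfl⟩
      obtain ⟨g, rfl⟩ := QuotientGroup.mk'_surjective N q
      refine ⟨g * x * g⁻¹, ⟨g, rfl⟩, ?_⟩
      show QuotientGroup.mk (g * x * g⁻¹) = π g * π x * (π g)⁻¹
      show QuotientGroup.mk (g * x * g⁻¹) =
        QuotientGroup.mk g * QuotientGroup.mk x * (QuotientGroup.mk g)⁻¹
      rw [← QuotientGroup.mk_inv, ← QuotientGroup.mk_mul, ← QuotientGroup.mk_mul]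
    · rintro ⟨w, ⟨g, rfl⟩, rfl⟩
      refine ⟨π g, ?_⟩
      show π (g * x * g⁻¹) = π g * π x * (π g)⁻¹
      rw [map_mul, map_mul, map_inv]
  have hCfin : C.Finite := by
    refine Set.Finite.biUnion hXfin (fun x hx => ?_)
    rw [hclass_eq]
    exact hX hx
  have hCconj : ∀ z ∈ C, ∀ q : G ⧸ N, q * z * q⁻¹ ∈ C := by
    intro z hz q
    rw [Set.mem_iUnion₂] at hz ⊢
    obtain ⟨x, hx, h, rfl⟩ := hz
    exact ⟨x, hx, q * h, by group⟩
  -- the centralizer and its preimage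
  let Wb : Subgroup (G ⧸ N) := Subgroup.centralizer C
  have hWbNormal : Wb.Normal := centralizer_normal hCconj
  have hWbFI : Wb.FiniteIndex := centralizer_finiteIndex hCfin hCconj
  let W : Subgroup G := Wb.comap π
  have hWnormal : W.Normal := hWbNormal.comap π
  have hWFI : W.FiniteIndex := by
    constructor
    rw [Subgroup.index_comap_of_surjective _ (QuotientGroup.mk'_surjective N)]
    exact hWbFI.index_ne_zero
  haveI := hWFI
  haveI : Group.FG ↥W := W.fg_of_index_ne_zero
  obtain ⟨B, hBclosure, hBfin⟩ :=
    (Subgroup.fg_iff W).mp ((Group.fg_iff_subgroup_fg W).mp ‹Group.FG ↥W›)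
  -- the new finite subset of N
  let Y : Set G := Set.image2 (fun x b => ⁅x, b⁆) X B
  have hYfin : Y.Finite := Set.Finite.image2 _ hXfin hBfin
  have hBW : B ⊆ (W : Set G) := hBclosure ▸ Subgroup.subset_closure
  have hYN : Y ⊆ (N : Set G) := by
    rintro z ⟨x, hx, b, hb, rfl⟩
    have hbW : b ∈ W := hBW hb
    have hπx : π x ∈ C := Set.mem_biUnion hx (self_mem_cclass (π x))
    have hcomm : π x * π b = π b * π x :=
      Subgroup.mem_centralizer_iff.mp hbW (π x) hπx
    have h1 : π ⁅x, b⁆ = 1 := by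
      rw [map_commutatorElement]
      exact commutatorElement_eq_one_iff_mul_comm.mpr hcomm
    have h2 : (QuotientGroup.mk ⁅x, b⁆ : G ⧸ N) = 1 := h1
    exact (QuotientGroup.eq_one_iff _).mp h2
  -- chain for the normal closure of Y
  obtain ⟨D', f', n', hD'norm, hD'fi, hf'norm, hf'0, hf'link, hf'n⟩ := hKey Y hYfin hYN
  haveI : (Subgroup.normalClosure Y).Normal := Subgroup.normalClosure_normal
  -- X is contained in commA W (normalClosure Y)
  have hXA : X ⊆ (commA W (Subgroup.normalClosure Y) : Set G) := by
    intro x hx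
    rw [SetLike.mem_coe, mem_commA_iff]
    intro w hw
    rw [← hBclosure] at hw
    induction hw using Subgroup.closure_induction with
    | mem b hb =>
      exact Subgroup.subset_normalClosure ⟨x, hx, b, hb, rfl⟩
    | one =>
      have : ⁅x, (1 : G)⁆ = 1 := by group
      rw [this]; exact Subgroup.one_mem _
    | mul a b ha hb iha ihb =>
      have hid : ⁅x, a * b⁆ = ⁅x, a⁆ * (a * ⁅x, b⁆ * a⁻¹) := by group
      rw [hid]
      exact Subgroup.mul_mem _ iha
        (Subgroup.Normal.conj_mem ‹(Subgroup.normalClosure Y).Normal› _ ihb a)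
    | inv a ha iha =>
      have hid : ⁅x, a⁻¹⁆ = a⁻¹ * ⁅x, a⁆⁻¹ * a := by group
      rw [hid]
      have h1 := Subgroup.inv_mem _ iha
      have := Subgroup.Normal.conj_mem ‹(Subgroup.normalClosure Y).Normal› _ h1 a⁻¹
      simpa using this
  have hMA : Subgroup.normalClosure X ≤ commA W (Subgroup.normalClosure Y) := by
    haveI := commA_normal (M' := Subgroup.normalClosure Y) hWnormal
    exact Subgroup.normalClosure_le_normal hXA
  -- assemble the chain
  refine ⟨W ⊓ D', fun j => Nat.casesOn j (Subgroup.normalClosure X) f', n' + 1,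
    ?_, ?_, ?_, rfl, ?_, hf'n⟩
  · constructor
    intro m hm g
    exact ⟨hWnormal.conj_mem _ hm.1 g, hD'norm.conj_mem _ hm.2 g⟩
  · haveI := hD'fi
    infer_instance
  · intro j
    cases j with
    | zero => exact Subgroup.normalClosure_normal
    | succ j => exact hf'norm j
  · intro j
    cases j with
    | zero =>
      show ⁅Subgroup.normalClosure X, W ⊓ D'⁆ ≤ f' 0
      rw [hf'0]
      refine Subgroup.commutator_le.mpr ?_
      intro m hm w hw
      exact (hMA hm) w hw.1
    | succ j =>
      exact le_trans (Subgroup.commutator_mono le_rfl inf_le_right) (hf'link j)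

lemma exists_beta {o : Ordinal.{u}} (ho : o ≠ 0) {X : Set G} (hXfin : X.Finite)
    (hX : X ⊆ (Fc (G := G) o : Set G)) :
    ∃ β : Ordinal.{u}, β < o ∧ X ⊆ (Tstep (Fc (G := G) β) : Set G) := by
  classical
  have hpos : (0 : Ordinal.{u}) < o := pos_iff_ne_zero.mpr ho
  haveI : Nonempty {β : Ordinal.{u} // β < o} := ⟨⟨0, hpos⟩⟩
  have hdir : Directed (· ≤ ·)
      (fun β : {β : Ordinal.{u} // β < o} => Tstep (Fc (G := G) β.1)) := by
    intro i j
    rcases le_total i.1 j.1 with h | h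
    · exact ⟨j, Tstep_mono (Fc_mono h), le_rfl⟩
    · exact ⟨i, le_rfl, Tstep_mono (Fc_mono h)⟩
  obtain ⟨Fs, rfl⟩ := hXfin.exists_finset_coe
  have hx' : ∀ x : {x // x ∈ Fs}, ∃ β : Ordinal.{u},
      β < o ∧ (x : G) ∈ Tstep (Fc (G := G) β) := by
    intro x
    have hmem : (x : G) ∈ Fc (G := G) o := hX x.2
    rw [Fc_def] at hmem
    obtain ⟨β, hβ⟩ := (Subgroup.mem_iSup_of_directed hdir).mp hmem
    exact ⟨β.1, β.2, hβ⟩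
  choose g hg₁ hg₂ using hx'
  rcases Finset.eq_empty_or_nonempty Fs with rfl | hne
  · exact ⟨0, hpos, by simp⟩
  · have hne' : Fs.attach.Nonempty := Finset.attach_nonempty_iff.mpr hne
    obtain ⟨x₀, _, hx₀⟩ := Finset.exists_mem_eq_sup Fs.attach hne' g
    refine ⟨Fs.attach.sup g, hx₀ ▸ hg₁ x₀, ?_⟩
    intro x hx
    exact Tstep_mono (Fc_mono (Finset.le_sup (Finset.mem_attach _ ⟨x, hx⟩)))
      (hg₂ ⟨x, hx⟩)

lemma keyProp_Fc (hfg : Group.FG G) (o : Ordinal.{u}) : KeyProp (Fc (G := G) o) := by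
  induction o using Ordinal.induction with
  | h o ih =>
  intro X hXfin hX
  rcases eq_or_ne o 0 with rfl | ho
  · have hbot : Fc (G := G) 0 = ⊥ := by
      rw [Fc_def]
      apply le_antisymm _ bot_le
      exact iSup_le fun β => absurd β.2 (not_lt_of_ge (zero_le (a := β.1)))
    rw [hbot] at hX
    have hXbot : Subgroup.normalClosure X = ⊥ :=
      le_bot_iff.mp (Subgroup.normalClosure_le_normal hX)
    rw [hXbot]
    exact nilpChain_bot
  · obtain ⟨β, hβo, hXT⟩ := exists_beta ho hXfin hX
    haveI := Fc_normal (G := G) β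
    exact step_key hfg (Fc_normal β) (ih β hβo) X hXfin
      (fun x hx => mem_Sset_of_mem_Tstep (hXT hx))

end FCHAux

/-- Every finitely generated FC-hypercentral group is nilpotent-by-finite. -/
theorem nilpotent_by_finite_of_fg_FCHypercentral (G : Type*) [Group G]
    (hfg : Group.FG G) (hFC : IsFCHypercentral G) :
    ∃ N : Subgroup G, N.Normal ∧ Group.IsNilpotent N ∧ N.FiniteIndex := by
  classical
  have htop : SubFCHypercenter G ⊤ := by
    have h := SubFCHypercenter.sup (G := G) {H | SubFCHypercenter G H} (fun H hH => hH)
    rwa [hFC] at h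
  obtain ⟨o, ho⟩ := FCHAux.exists_le_Fc htop
  obtain ⟨S, hSclosure, hSfin⟩ := Group.fg_iff.mp hfg
  have hS : S ⊆ (FCHAux.Fc (G := G) o : Set G) := fun x _ => ho (Subgroup.mem_top x)
  have hchain := FCHAux.keyProp_Fc hfg o S hSfin hS
  have hMtop : Subgroup.normalClosure S = ⊤ := by
    rw [eq_top_iff, ← hSclosure]
    exact le_trans ((Subgroup.closure_le _).mpr Subgroup.subset_normalClosure) le_rfl
  rw [hMtop] at hchain
  obtain ⟨D, f, n, hDnorm, hDfi, hfnorm, hf0, hlink, hfn⟩ := hchain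
  refine ⟨D, hDnorm, ?_, hDfi⟩
  have key : ∀ j, Subgroup.map D.subtype (Subgroup.lowerCentralSeries (⊤ : Subgroup ↥D) j) ≤ f j := by
    intro j
    induction j with
    | zero =>
      rw [hf0]
      exact le_top
    | succ j ihj =>
      have hstep : Subgroup.lowerCentralSeries (⊤ : Subgroup ↥D) (j + 1) =
          ⁅Subgroup.lowerCentralSeries (⊤ : Subgroup ↥D) j, (⊤ : Subgroup ↥D)⁆ := rfl
      rw [hstep, Subgroup.map_commutator]
      refine le_trans (Subgroup.commutator_mono ihj ?_) (hlink j)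
      rw [← MonoidHom.range_eq_map, Subgroup.range_subtype]
  have hlcs : Subgroup.lowerCentralSeries (⊤ : Subgroup ↥D) n = ⊥ := by
    have h1 : Subgroup.map D.subtype (Subgroup.lowerCentralSeries (⊤ : Subgroup ↥D) n) = ⊥ :=
      le_bot_iff.mp (hfn ▸ key n)
    rw [Subgroup.map_eq_bot_iff] at h1
    rw [Subgroup.ker_subtype, le_bot_iff] at h1
    exact h1
  exact Subgroup.nilpotent_iff_lowerCentralSeries.mpr ⟨n, hlcs⟩
end
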